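/- arXiv:1606.08354 — 4 statements merged into one kernel-verified Lean document; each statement's English description precedes it below -/
import Mathlib

section
/- A matroid is laminar if and only if it has no minor isomorphic to Y_r for any r ≥ 3, where Y_r is the truncation to rank r of the parallel connection of two r-element circuits. -/
open Set Matroid

variable {α : Type*}

/-- A circuit: a minimal dependent set. -/
def Matroid.IsCircuit' (M : Matroid α) (C : Set α) : Prop :=
  M.Dep C ∧ ∀ D, D ⊂ C → M.Indep D

/-- The circuit characterization of laminar matroids. -/
def Matroid.IsLaminar (M : Matroid α) : Prop :=
  ∀ C₁ C₂, M.IsCircuit' C₁ → M.IsCircuit' C₂ → (C₁ ∩ C₂).Nonempty →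
    M.closure C₁ ⊆ M.closure C₂ ∨ M.closure C₂ ⊆ M.closure C₁

/-- A laminar family: any two intersecting members are comparable. -/
def IsLaminarFamily (𝒜 : Set (Set α)) : Prop :=
  ∀ A ∈ 𝒜, ∀ B ∈ 𝒜, (A ∩ B).Nonempty → A ⊆ B ∨ B ⊆ A

/-- `M` is presented by the laminar family `𝒜` with capacities `c`. -/
def Matroid.IsLaminarPresBy (M : Matroid α) (E : Set α) (𝒜 : Set (Set α)) (c : Set α → ℕ) :
    Prop :=
  M.E = E ∧ ∀ I, M.Indep I ↔ I ⊆ E ∧ ∀ A ∈ 𝒜, (I ∩ A).ncard ≤ c A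

/-- `M` has some laminar presentation (on its own ground set); this captures being
isomorphic to a laminar matroid `M(E, 𝒜, c)`. -/
def Matroid.HasLaminarPres (M : Matroid α) : Prop :=
  ∃ (𝒜 : Set (Set α)) (c : Set α → ℕ), IsLaminarFamily 𝒜 ∧ (∀ A ∈ 𝒜, A ⊆ M.E) ∧
    M.IsLaminarPresBy M.E 𝒜 c

/-- Deletion of a set of elements. -/
def Matroid.del (M : Matroid α) (X : Set α) : Matroid α := M ↾ (M.E \ X)

/-- Contraction of a set of elements, defined via duality. -/
def Matroid.con (M : Matroid α) (X : Set α) : Matroid α := (M✶ ↾ (M.E \ X))✶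

/-- `IsMinor M N` means `N` is obtained from `M` by a sequence of single-element
deletions and contractions. -/
inductive IsMinor : Matroid α → Matroid α → Prop
  | refl (M : Matroid α) : IsMinor M M
  | del (M N : Matroid α) (e : α) : IsMinor M N → IsMinor M (N.del {e})
  | con (M N : Matroid α) (e : α) : IsMinor M N → IsMinor M (N.con {e})

/-- `YrSpec N r C₁ C₂` says that `N` is (isomorphic to) the matroid `Y_r`: the truncation
to rank `r` of the parallel connection of the two `r`-element circuits `C₁` and `C₂`,
which meet in a single basepoint. -/
def YrSpec (N : Matroid α) (r : ℕ) (C₁ C₂ : Set α) : Prop :=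
  C₁.Finite ∧ C₂.Finite ∧ C₁.ncard = r ∧ C₂.ncard = r ∧ (C₁ ∩ C₂).ncard = 1 ∧
  N.E = C₁ ∪ C₂ ∧
  ∀ I, N.Indep I ↔ I ⊆ C₁ ∪ C₂ ∧ I.ncard ≤ r ∧ ¬ C₁ ⊆ I ∧ ¬ C₂ ⊆ I

namespace Matroid

variable {M : Matroid α} {C C₁ C₂ D I X : Set α} {e f x y : α}

lemma IsCircuit'.dep (h : M.IsCircuit' C) : M.Dep C := h.1

lemma IsCircuit'.subset_ground (h : M.IsCircuit' C) : C ⊆ M.E := h.1.subset_ground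

lemma IsCircuit'.ssubset_indep (h : M.IsCircuit' C) (hD : D ⊂ C) : M.Indep D := h.2 D hD

lemma IsCircuit'.nonempty (h : M.IsCircuit' C) : C.Nonempty := by
  rcases eq_empty_or_nonempty C with rfl | h'
  · exact absurd M.empty_indep h.dep.not_indep
  · exact h'

lemma IsCircuit'.not_subset (h : M.IsCircuit' C) (hI : M.Indep I) : ¬ C ⊆ I := by
  intro hCI
  exact h.dep.not_indep (hI.subset hCI)

lemma IsCircuit'.eq_of_subset (h : M.IsCircuit' C) (h' : M.IsCircuit' D) (hDC : D ⊆ C) : D = C := by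
  by_contra hne
  exact h'.dep.not_indep (h.ssubset_indep (hDC.ssubset_of_ne hne))

lemma IsCircuit'.diff_singleton_indep (h : M.IsCircuit' C) (he : e ∈ C) : M.Indep (C \ {e}) :=
  h.ssubset_indep (diff_singleton_ssubset.2 he)

lemma IsCircuit'.mem_closure_diff_singleton (h : M.IsCircuit' C) (he : e ∈ C) :
    e ∈ M.closure (C \ {e}) := by
  have hI := h.diff_singleton_indep he
  have hdep : M.Dep (insert e (C \ {e})) := by
    rw [insert_diff_singleton, insert_eq_of_mem he]; exact h.dep
  exact (hI.insert_dep_iff.1 hdep).1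

lemma IsCircuit'.closure_diff_singleton (h : M.IsCircuit' C) (he : e ∈ C) :
    M.closure (C \ {e}) = M.closure C := by
  nth_rewrite 2 [show C = insert e (C \ {e}) by rw [insert_diff_singleton, insert_eq_of_mem he]]
  rw [closure_insert_eq_of_mem_closure (h.mem_closure_diff_singleton he)]

/-- every finite dependent set contains a circuit. -/
lemma Dep.exists_isCircuit'_subset (hX : M.Dep X) (hfin : X.Finite) :
    ∃ C, M.IsCircuit' C ∧ C ⊆ X := by
  classical
  obtain ⟨n, hn⟩ : ∃ n, X.ncard = n := ⟨_, rfl⟩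
  induction n using Nat.strong_induction_on generalizing X with
  | _ n IH =>
    by_cases h : ∀ D, D ⊂ X → M.Indep D
    · exact ⟨X, ⟨hX, h⟩, Subset.rfl⟩
    · push_neg at h
      obtain ⟨D, hDX, hDdep⟩ := h
      have hD : M.Dep D := ⟨hDdep, hDX.subset.trans hX.subset_ground⟩
      have hDfin : D.Finite := hfin.subset hDX.subset
      obtain ⟨C, hC, hCD⟩ := IH D.ncard (hn ▸ Set.ncard_lt_ncard hDX hfin) hD hDfin rfl
      exact ⟨C, hC, hCD.trans hDX.subset⟩

lemma Indep.notMem_closure_diff_of_mem' (hI : M.Indep I) (he : e ∈ I) :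
    e ∉ M.closure (I \ {e}) := hI.notMem_closure_diff_of_mem he

/-- fundamental circuit -/
lemma Indep.exists_isCircuit'_of_mem_closure (hI : M.Indep I) (hfin : I.Finite)
    (he : e ∈ M.closure I) (heI : e ∉ I) :
    ∃ C, M.IsCircuit' C ∧ e ∈ C ∧ C ⊆ insert e I := by
  have hdep : M.Dep (insert e I) := hI.insert_dep_iff.2 ⟨he, heI⟩
  obtain ⟨C, hC, hCsub⟩ := hdep.exists_isCircuit'_subset (hfin.insert e)
  refine ⟨C, hC, ?_, hCsub⟩
  by_contra heC
  exact hC.dep.not_indep (hI.subset (fun x hx => ((hCsub hx).resolve_left (by rintro rfl; exact heC hx))))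

/-- strong circuit elimination, in the form we need. -/
lemma IsCircuit'.strong_elimination (h₁ : M.IsCircuit' C₁) (h₂ : M.IsCircuit' C₂)
    (hfin : (C₁ ∪ C₂).Finite) (hf : f ∈ C₁ \ C₂) (he : e ∈ C₂) :
    ∃ C, M.IsCircuit' C ∧ f ∈ C ∧ C ⊆ (C₁ ∪ C₂) \ {e} := by
  classical
  set X : Set α := (C₁ ∪ C₂) \ {e, f} with hX
  have hXE : X ⊆ M.E := (diff_subset).trans (union_subset h₁.subset_ground h₂.subset_ground)
  obtain ⟨I, hI⟩ := M.exists_isBasis X hXE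
  have hfe : f ≠ e := by rintro rfl; exact hf.2 he
  -- e ∈ cl X
  have heX : e ∈ M.closure X := by
    have h1 : C₂ \ {e} ⊆ X := by
      intro z hz
      refine ⟨Or.inr hz.1, ?_⟩
      simp only [mem_insert_iff, mem_singleton_iff]
      rintro (rfl | rfl)
      · exact hz.2 rfl
      · exact hf.2 hz.1
    exact (M.closure_subset_closure h1) (h₂.mem_closure_diff_singleton he)
  -- f ∈ cl (insert e X) = cl X
  have hfX : f ∈ M.closure X := by
    have h2 : C₁ \ {f} ⊆ insert e X := by
      intro z hz
      by_cases hze : z = e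
      · exact Or.inl hze
      · refine Or.inr ⟨Or.inl hz.1, ?_⟩
        simp only [mem_insert_iff, mem_singleton_iff]
        rintro (rfl | rfl)
        · exact hze rfl
        · exact hz.2 rfl
    have : f ∈ M.closure (insert e X) :=
      (M.closure_subset_closure h2) (h₁.mem_closure_diff_singleton hf.1)
    rwa [closure_insert_eq_of_mem_closure heX] at this
  have hfI : f ∈ M.closure I := by rwa [hI.closure_eq_closure]
  have hfnI : f ∉ I := fun hfi => by
    have := hI.subset hfi
    exact this.2 (by simp)
  obtain ⟨C, hC, hfC, hCsub⟩ := hI.indep.exists_isCircuit'_of_mem_closure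
    (hfin.subset (hI.subset.trans diff_subset)) hfI hfnI
  refine ⟨C, hC, hfC, hCsub.trans ?_⟩
  intro z hz
  rcases hz with rfl | hz
  · exact ⟨Or.inl hf.1, by simpa using hfe⟩
  · have := hI.subset hz
    refine ⟨this.1, fun hze => this.2 ?_⟩
    simp only [mem_singleton_iff] at hze
    simp [hze]



@[simp] lemma del_ground (M : Matroid α) (X : Set α) : (M.del X).E = M.E \ X := rfl

@[simp] lemma con_ground (M : Matroid α) (X : Set α) : (M.con X).E = M.E \ X := rfl

@[simp] lemma del_indep_iff : (M.del X).Indep I ↔ M.Indep I ∧ I ⊆ M.E \ X :=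
  restrict_indep_iff

lemma del_singleton_indep_iff : (M.del {x}).Indep I ↔ M.Indep I ∧ x ∉ I := by
  rw [del_indep_iff]
  constructor
  · rintro ⟨h1, h2⟩; exact ⟨h1, fun hx => (h2 hx).2 rfl⟩
  · rintro ⟨h1, h2⟩
    exact ⟨h1, subset_diff_singleton h1.subset_ground h2⟩

/-- closure of a restriction to a subset of the ground set. -/
lemma restrict_closure_eq'' {R : Set α} (hZR : Z ⊆ R) (hR : R ⊆ M.E) :
    (M ↾ R).closure Z = M.closure Z ∩ R := by
  obtain ⟨I, hI⟩ := M.exists_isBasis Z (hZR.trans hR)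
  have hIR : (M ↾ R).IsBasis I Z := by
    rw [isBasis_restrict_iff hR]
    exact ⟨hI, hZR⟩
  rw [← hIR.closure_eq_closure, ← hI.closure_eq_closure]
  ext e
  rw [hIR.indep.mem_closure_iff', restrict_indep_iff, restrict_ground_eq, mem_inter_iff,
    hI.indep.mem_closure_iff']
  constructor
  · rintro ⟨heR, h2⟩
    exact ⟨⟨hR heR, fun hind => h2 ⟨hind, insert_subset heR (hI.indep.subset_ground.trans
      (fun a ha => ha) |>.trans (subset_refl _) |> fun _ => (hI.subset.trans hZR))⟩⟩, heR⟩
  · rintro ⟨⟨heE, h2⟩, heR⟩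
    exact ⟨heR, fun hind => h2 hind.1⟩

lemma del_singleton_closure (hZ : Z ⊆ M.E \ {x}) :
    (M.del {x}).closure Z = M.closure Z \ {x} := by
  rw [Matroid.del, restrict_closure_eq'' hZ diff_subset]
  have h1 : M.closure Z ⊆ M.E := M.closure_subset_ground Z
  ext e
  simp only [mem_inter_iff, mem_diff, mem_singleton_iff]
  exact ⟨fun ⟨h, _, hx⟩ => ⟨h, hx⟩, fun ⟨h, hx⟩ => ⟨h, h1 h, hx⟩⟩

lemma del_not_mem (hx : x ∉ M.E) : M.del {x} = M := by
  rw [Matroid.del, diff_singleton_eq_self hx, restrict_ground_eq_self]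

lemma con_not_mem (hx : x ∉ M.E) : M.con {x} = M := by
  have h : M.E \ {x} = M✶.E := by rw [dual_ground, diff_singleton_eq_self hx]
  rw [Matroid.con, h, restrict_ground_eq_self, dual_dual]

/-- x in every base of the dual iff x is a loop -/
lemma mem_dual_base_of_not_indep (hx : x ∈ M.E) (hl : ¬ M.Indep {x}) (hB : M✶.IsBase B) :
    x ∈ B := by
  by_contra hxB
  have := hB.compl_isBase_of_dual
  exact hl (this.indep.subset (singleton_subset_iff.2 ⟨hx, hxB⟩))

lemma base_restrict_dual_iff_nonloop (hx : M.Indep {x}) :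
    ∀ B, (M✶ ↾ (M.E \ {x})).IsBase B ↔ ∃ B₀, M.IsBase B₀ ∧ x ∈ B₀ ∧ B = M.E \ B₀ := by
  intro B
  have hgd : M.E \ {x} ⊆ M✶.E := diff_subset
  rw [isBase_restrict_iff', isBasis'_iff_isBasis hgd]
  constructor
  · intro hB
    -- B is a base of M✶
    obtain ⟨B₀', hB₀', hxB₀'⟩ := hx.exists_isBase_superset
    have hxB₀ : x ∈ B₀' := hxB₀' rfl
    have hB₁ : M✶.IsBase (M.E \ B₀') := hB₀'.compl_isBase_dual
    have hB₁sub : M.E \ B₀' ⊆ M.E \ {x} := diff_subset_diff_right (singleton_subset_iff.2 hxB₀)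
    have hcl : M✶.E ⊆ M✶.closure (M.E \ {x}) := by
      rw [← hB₁.closure_eq]
      exact M✶.closure_subset_closure hB₁sub
    have hBbase : M✶.IsBase B := hB.indep.isBase_of_ground_subset_closure
      (by rw [hB.closure_eq_closure]; exact hcl)
    refine ⟨M.E \ B, hBbase.compl_isBase_of_dual, ⟨hx.subset_ground rfl, fun hxB => (hB.subset hxB).2 rfl⟩, ?_⟩
    rw [diff_diff_cancel_left (hB.subset.trans diff_subset)]
  · rintro ⟨B₀, hB₀, hxB₀, rfl⟩
    have hBbase : M✶.IsBase (M.E \ B₀) := hB₀.compl_isBase_dual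
    refine hBbase.indep.isBasis_of_forall_insert (diff_subset_diff_right (singleton_subset_iff.2 hxB₀)) ?_
    intro e he
    exact hBbase.insert_dep ⟨he.1.1, he.2⟩

lemma con_singleton_indep_iff (hx : M.Indep {x}) :
    (M.con {x}).Indep I ↔ M.Indep (insert x I) ∧ x ∉ I := by
  rw [Matroid.con, dual_indep_iff_exists']
  simp only [restrict_ground_eq]
  constructor
  · rintro ⟨hIsub, B, hB, hdisj⟩
    obtain ⟨B₀, hB₀, hxB₀, rfl⟩ := (base_restrict_dual_iff_nonloop hx B).1 hB
    have hIB₀ : I ⊆ B₀ := fun z hz =>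
      by_contra fun hzB₀ => (hdisj.ne_of_mem hz ⟨(hIsub hz).1, hzB₀⟩) rfl
    exact ⟨hB₀.indep.subset (insert_subset hxB₀ hIB₀), fun hxI => (hIsub hxI).2 rfl⟩
  · rintro ⟨hind, hxI⟩
    obtain ⟨B₀, hB₀, hsub⟩ := hind.exists_isBase_superset
    refine ⟨subset_diff_singleton ((hind.subset (subset_insert _ _)).subset_ground) hxI,
      M.E \ B₀, (base_restrict_dual_iff_nonloop hx _).2 ⟨B₀, hB₀, hsub (mem_insert _ _), rfl⟩, ?_⟩
    exact disjoint_of_subset_left (fun z hz => hsub (mem_insert_of_mem _ hz))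
      disjoint_sdiff_right

lemma con_singleton_loop_eq_del (hx : x ∈ M.E) (hl : ¬ M.Indep {x}) :
    M.con {x} = M.del {x} := by
  refine ext_indep rfl ?_
  intro I hI
  simp only [con_ground] at hI
  have hxI : x ∉ I := fun h => (hI h).2 rfl
  rw [Matroid.con, dual_indep_iff_exists', del_singleton_indep_iff]
  simp only [restrict_ground_eq]
  have hbase : ∀ B, (M✶ ↾ (M.E \ {x})).IsBase B ↔ ∃ B₀, M✶.IsBase B₀ ∧ B = B₀ \ {x} := by
    intro B
    have hgd : M.E \ {x} ⊆ M✶.E := diff_subset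
    rw [isBase_restrict_iff', isBasis'_iff_isBasis hgd]
    constructor
    · intro hB
      obtain ⟨B₀, hB₀, hsub⟩ := hB.indep.exists_isBase_superset
      have hB₀sub : B₀ ⊆ insert x B := by
        intro w hw
        by_cases hwx : w = x
        · exact Or.inl hwx
        · by_contra hwB
          have hwB' : w ∉ B := fun h => hwB (Or.inr h)
          have hdep : M✶.Dep (insert w B) := hB.insert_dep ⟨⟨hB₀.subset_ground hw, hwx⟩, hwB'⟩
          exact hdep.not_indep (hB₀.indep.subset (insert_subset hw hsub))
      refine ⟨B₀, hB₀, Subset.antisymm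
        (subset_diff_singleton hsub (fun h => (hB.subset h).2 rfl)) ?_⟩
      intro z hz
      rcases hB₀sub hz.1 with h | h
      · exact absurd h hz.2
      · exact h
    · rintro ⟨B₀, hB₀, rfl⟩
      refine (hB₀.indep.subset diff_subset).isBasis_of_forall_insert
        (diff_subset_diff_left hB₀.subset_ground) ?_
      intro w hw
      have hwx : w ≠ x := hw.1.2
      have hwB₀ : w ∉ B₀ := fun h => hw.2 ⟨h, hwx⟩
      rw [dep_iff]
      refine ⟨fun hind => ?_, insert_subset hw.1.1 (diff_subset.trans hB₀.subset_ground)⟩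
      have hbase' := hB₀.exchange_isBase_of_indep (e := x) hwB₀ hind
      have hxmem := mem_dual_base_of_not_indep hx hl hbase'
      rcases hxmem with h | h
      · exact hwx h.symm
      · exact h.2 rfl
  constructor
  · rintro ⟨hIsub, B, hB, hdisj⟩
    obtain ⟨B₀, hB₀, rfl⟩ := (hbase B).1 hB
    refine ⟨?_, hxI⟩
    have : M✶✶.Indep I := by
      rw [dual_indep_iff_exists']
      refine ⟨hIsub.trans diff_subset, B₀, hB₀, ?_⟩
      rw [disjoint_left]
      intro z hz hzB₀
      have hzx : z ≠ x := fun h => hxI (h ▸ hz)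
      exact hdisj.ne_of_mem hz ⟨hzB₀, hzx⟩ rfl
    rwa [dual_dual] at this
  · rintro ⟨hind, _⟩
    have hdd : M✶✶.Indep I := by rwa [dual_dual]
    rw [dual_indep_iff_exists'] at hdd
    obtain ⟨hIE, B₀, hB₀, hdisj⟩ := hdd
    exact ⟨hI, B₀ \ {x}, (hbase _).2 ⟨B₀, hB₀, rfl⟩, disjoint_of_subset_right diff_subset hdisj⟩



lemma con_singleton_closure (hx : M.Indep {x}) (hZ : Z ⊆ M.E \ {x}) :
    (M.con {x}).closure Z = M.closure (insert x Z) \ {x} := by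
  set Q := M.con {x} with hQ
  have hQE : Q.E = M.E \ {x} := rfl
  obtain ⟨I, hI⟩ := Q.exists_isBasis Z (by rw [hQE]; exact hZ)
  have hIcon := (con_singleton_indep_iff hx).1 hI.indep
  have hIZ := hI.subset
  have hbasis : M.IsBasis (insert x I) (insert x Z) := by
    refine hIcon.1.isBasis_of_subset_of_subset_closure (insert_subset_insert hIZ) ?_
    intro w hw
    rcases hw with rfl | hwZ
    · exact M.subset_closure _ hIcon.1.subset_ground (mem_insert _ _)
    · by_cases hwI : w ∈ I
      · exact M.subset_closure _ hIcon.1.subset_ground (mem_insert_of_mem _ hwI)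
      · have hdep : Q.Dep (insert w I) := hI.insert_dep ⟨hwZ, hwI⟩
        have hnind : ¬ M.Indep (insert w (insert x I)) := by
          intro hind
          refine hdep.not_indep ?_
          rw [hQ, con_singleton_indep_iff hx, insert_comm]
          refine ⟨hind, ?_⟩
          rintro (rfl | hxI)
          · exact (hZ hwZ).2 rfl
          · exact hIcon.2 hxI
        rw [hIcon.1.mem_closure_iff']
        exact ⟨(hZ hwZ).1, fun hind => absurd hind hnind⟩
  rw [← hI.closure_eq_closure, ← hbasis.closure_eq_closure]
  ext e
  rw [hI.indep.mem_closure_iff', mem_diff, hIcon.1.mem_closure_iff', hQ,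
    con_singleton_indep_iff hx, hQE]
  constructor
  · rintro ⟨⟨heE, hex⟩, himp⟩
    simp only [mem_singleton_iff] at hex
    refine ⟨⟨heE, fun hind => ?_⟩, by simpa using hex⟩
    have hQind : M.Indep (insert x (insert e I)) ∧ x ∉ insert e I := by
      rw [insert_comm]
      refine ⟨hind, ?_⟩
      rintro (rfl | hxI)
      · exact hex rfl
      · exact hIcon.2 hxI
    exact Or.inr (himp hQind)
  · rintro ⟨⟨heE, himp⟩, hex⟩
    simp only [mem_singleton_iff] at hex
    refine ⟨⟨heE, by simpa using hex⟩, fun hind => ?_⟩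
    have := himp (by rw [insert_comm]; exact hind.1)
    rcases this with h | h
    · exact absurd h hex
    · exact h

lemma del_isCircuit'_iff : (M.del {x}).IsCircuit' C ↔ M.IsCircuit' C ∧ x ∉ C := by
  constructor
  · rintro ⟨hdep, hmin⟩
    rw [dep_iff] at hdep
    have hxC : x ∉ C := fun h => (hdep.2 h).2 rfl
    exact ⟨⟨⟨fun hind => hdep.1 (del_singleton_indep_iff.2 ⟨hind, hxC⟩),
      hdep.2.trans diff_subset⟩,
      fun D hD => (del_singleton_indep_iff.1 (hmin D hD)).1⟩, hxC⟩
  · rintro ⟨⟨hdep, hmin⟩, hxC⟩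
    refine ⟨?_, fun D hD => ?_⟩
    · rw [dep_iff]
      refine ⟨fun hind => hdep.not_indep ((del_singleton_indep_iff.1 hind).1), ?_⟩
      exact subset_diff_singleton hdep.subset_ground hxC
    · exact del_singleton_indep_iff.2 ⟨hmin D hD, fun h => hxC (hD.subset h)⟩

lemma IsCircuit'.con_diff_singleton (hx : M.Indep {x}) (hC : M.IsCircuit' C) (hxC : x ∈ C) :
    (M.con {x}).IsCircuit' (C \ {x}) := by
  have hins : insert x (C \ {x}) = C := by rw [insert_diff_singleton, insert_eq_of_mem hxC]
  constructor
  · rw [dep_iff]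
    constructor
    · intro hind
      rw [con_singleton_indep_iff hx, hins] at hind
      exact hC.1.not_indep hind.1
    · exact diff_subset_diff_left hC.1.subset_ground
  · intro D hD
    rw [con_singleton_indep_iff hx]
    have hxD : x ∉ D := fun h => (hD.subset h).2 rfl
    refine ⟨hC.2 _ ?_, hxD⟩
    rw [← hins]
    exact insert_subset_insert hD.subset |>.ssubset_of_ne (by
      intro heq
      obtain ⟨w, hw1, hw2⟩ := exists_of_ssubset hD
      have : w ∈ insert x D := heq ▸ (mem_insert_of_mem _ hw1)
      rcases this with rfl | h
      · exact hw1.2 rfl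
      · exact hw2 h)

lemma isCircuit'_con_of_forall (hx : M.Indep {x}) (hfinE : M.E.Finite) (hC : M.IsCircuit' C)
    (hxC : x ∉ C) (h : ∀ C', M.IsCircuit' C' → C' ⊆ insert x C → x ∉ C') :
    (M.con {x}).IsCircuit' C := by
  constructor
  · rw [dep_iff]
    refine ⟨fun hind => ?_, subset_diff_singleton hC.1.subset_ground hxC⟩
    rw [con_singleton_indep_iff hx] at hind
    exact hC.1.not_indep (hind.1.subset (subset_insert _ _))
  · intro D hD
    rw [con_singleton_indep_iff hx]
    have hxD : x ∉ D := fun hh => hxC (hD.subset hh)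
    refine ⟨?_, hxD⟩
    by_contra hdep
    have hdep' : M.Dep (insert x D) := by
      rw [dep_iff]
      exact ⟨hdep, insert_subset (hx.subset_ground rfl) ((hD.subset.trans hC.1.subset_ground))⟩
    obtain ⟨C', hC', hC'sub⟩ := hdep'.exists_isCircuit'_subset (hfinE.subset hdep'.subset_ground)
    have hxC' : x ∉ C' := h C' hC' (hC'sub.trans (insert_subset_insert hD.subset))
    have hC'D : C' ⊆ D := fun z hz => ((hC'sub hz).resolve_left (fun hh => hxC' (hh ▸ hz)))
    exact hC'.1.not_indep (hC.2 _ (hC'D.trans_ssubset hD))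

lemma isCircuit'_of_con (hx : M.Indep {x}) (hfinE : M.E.Finite)
    (hD : (M.con {x}).IsCircuit' D) :
    M.IsCircuit' D ∨ M.IsCircuit' (insert x D) := by
  have hxD : x ∉ D := fun h => (hD.1.subset_ground h).2 rfl
  have hdep : M.Dep (insert x D) := by
    rw [dep_iff]
    refine ⟨fun hind => ?_, insert_subset (hx.subset_ground rfl)
      (hD.1.subset_ground.trans diff_subset)⟩
    exact hD.1.not_indep ((con_singleton_indep_iff hx).2 ⟨hind, hxD⟩)
  obtain ⟨C, hC, hCsub⟩ := hdep.exists_isCircuit'_subset (hfinE.subset hdep.subset_ground)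
  by_cases hxC : x ∈ C
  · right
    have hsub : C \ {x} ⊆ D := fun z hz => ((hCsub hz.1).resolve_left (fun h => hz.2 h))
    have heq : C \ {x} = D := by
      by_contra hne
      have hss : C \ {x} ⊂ D := hsub.ssubset_of_ne hne
      have := hD.2 _ hss
      rw [con_singleton_indep_iff hx] at this
      rw [insert_diff_singleton, insert_eq_of_mem hxC] at this
      exact hC.1.not_indep this.1
    rw [← heq, insert_diff_singleton, insert_eq_of_mem hxC]
    exact hC
  · left
    have hsub : C ⊆ D := fun z hz => ((hCsub hz).resolve_left (fun h => hxC (h ▸ hz)))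
    have heq : C = D := by
      by_contra hne
      have hss : C ⊂ D := hsub.ssubset_of_ne hne
      have := hD.2 _ hss
      rw [con_singleton_indep_iff hx] at this
      exact hC.1.not_indep (this.1.subset (subset_insert _ _))
    rw [← heq] at hD ⊢
    exact hC

end Matroid
namespace Matroid

variable {M N : Matroid α} {C C₁ C₂ D D₁ D₂ I J X Z Z₁ Z₂ : Set α} {e f u w x y : α}

lemma closure_insert_mono (h : M.closure Z₁ ⊆ M.closure Z₂) :
    M.closure (insert x Z₁) ⊆ M.closure (insert x Z₂) := by
  rw [← closure_insert_closure_eq_closure_insert, ← M.closure_insert_closure_eq_closure_insert x Z₂]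
  exact M.closure_subset_closure (insert_subset_insert h)

lemma IsLaminar.del (h : M.IsLaminar) : (M.del {x}).IsLaminar := by
  intro C₁ C₂ h₁ h₂ hint
  rw [del_isCircuit'_iff] at h₁ h₂
  have hs₁ : C₁ ⊆ M.E \ {x} := subset_diff_singleton h₁.1.subset_ground h₁.2
  have hs₂ : C₂ ⊆ M.E \ {x} := subset_diff_singleton h₂.1.subset_ground h₂.2
  rw [del_singleton_closure hs₁, del_singleton_closure hs₂]
  rcases h C₁ C₂ h₁.1 h₂.1 hint with hc | hc
  · exact Or.inl (diff_subset_diff_left hc)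
  · exact Or.inr (diff_subset_diff_left hc)

lemma IsLaminar.con (h : M.IsLaminar) (hfinE : M.E.Finite) : (M.con {x}).IsLaminar := by
  by_cases hxE : x ∈ M.E
  swap
  · rw [con_not_mem hxE]; exact h
  by_cases hxl : M.Indep {x}
  swap
  · rw [con_singleton_loop_eq_del hxE hxl]; exact h.del
  intro D₁ D₂ h₁ h₂ hint
  have hs₁ : D₁ ⊆ M.E \ {x} := h₁.subset_ground
  have hs₂ : D₂ ⊆ M.E \ {x} := h₂.subset_ground
  have hx₁ : x ∉ D₁ := fun hh => (hs₁ hh).2 rfl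
  have hx₂ : x ∉ D₂ := fun hh => (hs₂ hh).2 rfl
  rw [con_singleton_closure hxl hs₁, con_singleton_closure hxl hs₂]
  have key : M.closure (insert x D₁) ⊆ M.closure (insert x D₂) ∨
      M.closure (insert x D₂) ⊆ M.closure (insert x D₁) := by
    rcases isCircuit'_of_con hxl hfinE h₁ with e₁ | e₁ <;>
      rcases isCircuit'_of_con hxl hfinE h₂ with e₂ | e₂
    · rcases h D₁ D₂ e₁ e₂ hint with hc | hc
      · exact Or.inl (closure_insert_mono hc)
      · exact Or.inr (closure_insert_mono hc)
    · rcases h D₁ (insert x D₂) e₁ e₂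
        (hint.mono (inter_subset_inter_right _ (subset_insert _ _))) with hc | hc
      · left
        calc M.closure (insert x D₁)
            ⊆ M.closure (insert x (M.closure (insert x D₂))) := by
              rw [← M.closure_insert_closure_eq_closure_insert x D₁]
              exact M.closure_subset_closure (insert_subset_insert hc)
          _ = M.closure (insert x D₂) := by
              rw [closure_insert_closure_eq_closure_insert, insert_idem]
      · right
        have hxcl : x ∈ M.closure D₁ := hc (M.subset_closure _ e₂.subset_ground (mem_insert _ _))
        rw [closure_insert_eq_of_mem_closure hxcl]
        exact hc
    · rcases h (insert x D₁) D₂ e₁ e₂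
        (hint.mono (inter_subset_inter_left _ (subset_insert _ _))) with hc | hc
      · left
        have hxcl : x ∈ M.closure D₂ := hc (M.subset_closure _ e₁.subset_ground (mem_insert _ _))
        rw [closure_insert_eq_of_mem_closure hxcl]
        exact hc
      · right
        calc M.closure (insert x D₂)
            ⊆ M.closure (insert x (M.closure (insert x D₁))) := by
              rw [← M.closure_insert_closure_eq_closure_insert x D₂]
              exact M.closure_subset_closure (insert_subset_insert hc)
          _ = M.closure (insert x D₁) := by
              rw [closure_insert_closure_eq_closure_insert, insert_idem]
    · exact h (insert x D₁) (insert x D₂) e₁ e₂ ⟨x, mem_insert _ _, mem_insert _ _⟩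
  rcases key with hc | hc
  · exact Or.inl (diff_subset_diff_left hc)
  · exact Or.inr (diff_subset_diff_left hc)

end Matroid

lemma IsMinor.laminar_finite {M N : Matroid α} (h : _root_.IsMinor M N) (hfin : M.E.Finite)
    (hM : M.IsLaminar) : N.IsLaminar ∧ N.E.Finite := by
  induction h with
  | refl => exact ⟨hM, hfin⟩
  | del N e hMN ih => exact ⟨(ih.1).del, (ih.2).subset diff_subset⟩
  | con N e hMN ih => exact ⟨(ih.1).con ih.2, (ih.2).subset diff_subset⟩

lemma IsMinor.trans {M N P : Matroid α} (h1 : _root_.IsMinor M N) (h2 : _root_.IsMinor N P) : _root_.IsMinor M P := by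
  induction h2 with
  | refl => exact h1
  | del P e hNP ih => exact IsMinor.del _ _ _ ih
  | con P e hNP ih => exact IsMinor.con _ _ _ ih

/-- `Y_r` is not laminar. -/
lemma YrSpec.not_isLaminar {N : Matroid α} {r : ℕ} {C₁ C₂ : Set α}
    (h : YrSpec N r C₁ C₂) (hr : 3 ≤ r) : ¬ N.IsLaminar := by
  obtain ⟨hf₁, hf₂, hc₁, hc₂, hcint, hE, hind⟩ := h
  have hC₁E : C₁ ⊆ N.E := hE ▸ subset_union_left
  have hC₂E : C₂ ⊆ N.E := hE ▸ subset_union_right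
  -- the two circuits
  have hcirc : ∀ C C' : Set α, C.Finite → C.ncard = r → C'.ncard = r → C ∪ C' = C₁ ∪ C₂ →
      (C ∩ C').ncard = 1 → (∀ I, N.Indep I ↔ I ⊆ C₁ ∪ C₂ ∧ I.ncard ≤ r ∧ ¬ C ⊆ I ∧ ¬ C' ⊆ I) →
      N.IsCircuit' C := by
    intro C C' hCfin hCr hC'r hun hint hind'
    constructor
    · rw [Matroid.dep_iff]
      refine ⟨fun hi => ?_, hE ▸ hun ▸ subset_union_left⟩
      rw [hind'] at hi
      exact hi.2.2.1 Subset.rfl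
    · intro D hD
      rw [hind']
      refine ⟨hD.subset.trans (hun ▸ subset_union_left), le_of_lt ?_, fun hsub => hD.ne ?_, ?_⟩
      · exact hCr ▸ Set.ncard_lt_ncard hD hCfin
      · exact Subset.antisymm hD.subset hsub
      · intro hsub
        have hsub' : C' ⊆ C := hsub.trans hD.subset
        have : C ∩ C' = C' := by rw [inter_eq_self_of_subset_right hsub']
        rw [this, hC'r] at hint
        omega
  have h₁ : N.IsCircuit' C₁ := hcirc C₁ C₂ hf₁ hc₁ hc₂ rfl hcint hind
  have h₂ : N.IsCircuit' C₂ := by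
    refine hcirc C₂ C₁ hf₂ hc₂ hc₁ (union_comm _ _) (by rwa [inter_comm]) ?_
    intro I
    rw [hind I]
    tauto
  have key : ∀ C C' : Set α, N.IsCircuit' C → N.IsCircuit' C' → C.Finite → C'.Finite →
      C.ncard = r → C'.ncard = r → (C ∩ C').ncard = 1 → C ∪ C' = C₁ ∪ C₂ →
      (∀ I, N.Indep I ↔ I ⊆ C₁ ∪ C₂ ∧ I.ncard ≤ r ∧ ¬ C ⊆ I ∧ ¬ C' ⊆ I) →
      ∃ u, u ∈ N.closure C ∧ u ∉ N.closure C' := by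
    intro C C' hC hC' hCfin hC'fin hCr hC'r hint hun hind'
    obtain ⟨u, huC, huC'⟩ : ∃ u, u ∈ C ∧ u ∉ C' := by
      by_contra hcon
      push_neg at hcon
      have h0 : C ∩ C' = C := inter_eq_self_of_subset_left hcon
      rw [h0, hCr] at hint
      omega
    obtain ⟨w, hwC', hwC⟩ : ∃ w, w ∈ C' ∧ w ∉ C := by
      by_contra hcon
      push_neg at hcon
      have h0 : C ∩ C' = C' := inter_eq_self_of_subset_right hcon
      rw [h0, hC'r] at hint
      omega
    refine ⟨u, N.subset_closure C (hE ▸ hun ▸ subset_union_left) huC, ?_⟩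
    have hJ : N.Indep (insert u (C' \ {w})) := by
      rw [hind']
      refine ⟨insert_subset (hun ▸ Or.inl huC) ((diff_subset).trans (hun ▸ subset_union_right)),
        ?_, ?_, ?_⟩
      · rw [Set.ncard_insert_of_notMem (fun hh => huC' hh.1) (hC'fin.diff),
          Set.ncard_diff_singleton_of_mem hwC', hC'r]
        omega
      · intro hsub
        have hsub2 : C \ {u} ⊆ C ∩ C' := by
          intro z hz
          rcases hsub hz.1 with h | h
          · exact absurd h hz.2
          · exact ⟨hz.1, h.1⟩
        have h1 : (C \ {u}).ncard ≤ 1 := hint ▸ Set.ncard_le_ncard hsub2 (hCfin.inter_of_left _)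
        rw [Set.ncard_diff_singleton_of_mem huC, hCr] at h1
        omega
      · intro hsub
        rcases hsub hwC' with h | h
        · exact huC' (h ▸ hwC')
        · exact h.2 rfl
    have hu : u ∉ N.closure ((insert u (C' \ {w})) \ {u}) :=
      hJ.notMem_closure_diff_of_mem (mem_insert _ _)
    have heq : (insert u (C' \ {w})) \ {u} = C' \ {w} := by
      rw [insert_diff_self_of_notMem]
      intro hh
      exact huC' hh.1
    rw [heq, hC'.closure_diff_singleton hwC'] at hu
    exact hu
  intro hlam
  have hind₂ : ∀ I, N.Indep I ↔ I ⊆ C₁ ∪ C₂ ∧ I.ncard ≤ r ∧ ¬ C₂ ⊆ I ∧ ¬ C₁ ⊆ I := by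
    intro I
    rw [hind I]
    tauto
  obtain ⟨u, hu1, hu2⟩ := key C₁ C₂ h₁ h₂ hf₁ hf₂ hc₁ hc₂ hcint rfl hind
  obtain ⟨v, hv1, hv2⟩ := key C₂ C₁ h₂ h₁ hf₂ hf₁ hc₂ hc₁ (by rwa [inter_comm])
    (union_comm _ _) hind₂
  have hne : (C₁ ∩ C₂).Nonempty := Set.nonempty_of_ncard_ne_zero (by omega)
  rcases hlam C₁ C₂ h₁ h₂ hne with hc | hc
  · exact hu2 (hc hu1)
  · exact hv2 (hc hv1)
namespace Matroid

variable {N : Matroid α} {C C₁ C₂ D I J P Q R S X Z : Set α} {a b c d e f u v w x y z : α}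

/-- not cl ⊆ cl gives an element of the circuit outside the other closure -/
lemma exists_witness (hC : C ⊆ N.E) (h : ¬ N.closure C ⊆ N.closure D) :
    ∃ u, u ∈ C ∧ u ∉ N.closure D := by
  by_contra hcon
  push_neg at hcon
  exact h (closure_subset_closure_of_subset_closure hcon)

/-- ♠ : an incomparable pair of intersecting circuits covers the ground set
and meets in at most one element, provided all single-element minors are laminar. -/
lemma witness_pair_lemma (hfin : N.E.Finite)
    (hstab : ∀ x ∈ N.E, (N.del {x}).IsLaminar ∧ (N.con {x}).IsLaminar)
    (h₁ : N.IsCircuit' C₁) (h₂ : N.IsCircuit' C₂) (hint : (C₁ ∩ C₂).Nonempty)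
    (hnc₁ : ¬ N.closure C₁ ⊆ N.closure C₂) (hnc₂ : ¬ N.closure C₂ ⊆ N.closure C₁) :
    C₁ ∪ C₂ = N.E ∧ ∀ f ∈ C₁ ∩ C₂, ∀ g ∈ C₁ ∩ C₂, f = g := by
  obtain ⟨u, huC, hucl⟩ := exists_witness h₁.subset_ground hnc₁
  obtain ⟨v, hvC, hvcl⟩ := exists_witness h₂.subset_ground hnc₂
  constructor
  · refine Subset.antisymm (union_subset h₁.subset_ground h₂.subset_ground) ?_
    intro x hx
    by_contra hxU
    have hx₁ : x ∉ C₁ := fun h => hxU (Or.inl h)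
    have hx₂ : x ∉ C₂ := fun h => hxU (Or.inr h)
    have hlam := (hstab x hx).1
    have hc₁ : (N.del {x}).IsCircuit' C₁ := del_isCircuit'_iff.2 ⟨h₁, hx₁⟩
    have hc₂ : (N.del {x}).IsCircuit' C₂ := del_isCircuit'_iff.2 ⟨h₂, hx₂⟩
    have hs₁ : C₁ ⊆ N.E \ {x} := subset_diff_singleton h₁.subset_ground hx₁
    have hs₂ : C₂ ⊆ N.E \ {x} := subset_diff_singleton h₂.subset_ground hx₂
    rcases hlam C₁ C₂ hc₁ hc₂ hint with hc | hc <;>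
      rw [del_singleton_closure hs₁, del_singleton_closure hs₂] at hc
    · have hu' : u ∈ N.closure C₁ \ {x} :=
        ⟨N.subset_closure _ h₁.subset_ground huC, fun h => hx₁ (h ▸ huC)⟩
      exact hucl (hc hu').1
    · have hv' : v ∈ N.closure C₂ \ {x} :=
        ⟨N.subset_closure _ h₂.subset_ground hvC, fun h => hx₂ (h ▸ hvC)⟩
      exact hvcl (hc hv').1
  · intro f hf g hg
    by_contra hfg
    -- f is not a loop
    have hne : C₁ ≠ {f} := by
      intro h
      rw [h] at hg
      rw [mem_inter_iff, mem_singleton_iff] at hg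
      exact hfg hg.1.symm
    have hfind : N.Indep {f} :=
      h₁.ssubset_indep ((singleton_subset_iff.2 hf.1).ssubset_of_ne (Ne.symm hne))
    have hfE : f ∈ N.E := h₁.subset_ground hf.1
    have hlam := (hstab f hfE).2
    have hc₁ := h₁.con_diff_singleton hfind hf.1
    have hc₂ := h₂.con_diff_singleton hfind hf.2
    have hgf : g ∉ ({f} : Set α) := by
      rw [mem_singleton_iff]
      exact fun h => hfg h.symm
    have hint' : ((C₁ \ {f}) ∩ (C₂ \ {f})).Nonempty := ⟨g, ⟨hg.1, hgf⟩, ⟨hg.2, hgf⟩⟩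
    have hclo : ∀ C, N.IsCircuit' C → f ∈ C →
        (N.con {f}).closure (C \ {f}) = N.closure C \ {f} := by
      intro C hC hfC
      rw [con_singleton_closure hfind (diff_subset_diff_left hC.subset_ground),
        insert_diff_singleton, insert_eq_of_mem hfC]
    rcases hlam _ _ hc₁ hc₂ hint' with hc | hc <;>
      rw [hclo _ h₁ hf.1, hclo _ h₂ hf.2] at hc
    · have hu' : u ∈ N.closure C₁ \ {f} :=
        ⟨N.subset_closure _ h₁.subset_ground huC, fun h => hucl (h ▸ N.subset_closure _
          h₂.subset_ground hf.2)⟩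
      exact hucl (hc hu').1
    · have hv' : v ∈ N.closure C₂ \ {f} :=
        ⟨N.subset_closure _ h₂.subset_ground hvC, fun h => hvcl (h ▸ N.subset_closure _
          h₁.subset_ground hf.1)⟩
      exact hvcl (hc hv').1

/-- pair dichotomy -/
lemma pair_dichotomy (hfin : N.E.Finite)
    (hstab : ∀ x ∈ N.E, (N.del {x}).IsLaminar ∧ (N.con {x}).IsLaminar)
    (h₁ : N.IsCircuit' C₁) (h₂ : N.IsCircuit' C₂) (hint : (C₁ ∩ C₂).Nonempty) :
    N.closure C₁ ⊆ N.closure C₂ ∨ N.closure C₂ ⊆ N.closure C₁ ∨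
      (C₁ ∪ C₂ = N.E ∧ ∀ f ∈ C₁ ∩ C₂, ∀ g ∈ C₁ ∩ C₂, f = g) := by
  by_cases hc₁ : N.closure C₁ ⊆ N.closure C₂
  · exact Or.inl hc₁
  by_cases hc₂ : N.closure C₂ ⊆ N.closure C₁
  · exact Or.inr (Or.inl hc₂)
  exact Or.inr (Or.inr (witness_pair_lemma hfin hstab h₁ h₂ hint hc₁ hc₂))

/-- two equicardinal finite independent sets, one in the span of the other, have equal closures -/
lemma closure_eq_closure_of_indep_card (hfin : N.E.Finite) (hI : N.Indep I) (hJ : N.Indep J)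
    (hIJ : I ⊆ N.closure J) (hcard : I.ncard = J.ncard) :
    N.closure I = N.closure J := by
  obtain ⟨I', hI'basis, hII'⟩ := hI.subset_isBasis_of_subset hIJ (N.closure_subset_ground J)
  have hJbasis : N.IsBasis J (N.closure J) := hJ.isBasis_closure
  have hIfin : I.Finite := hfin.subset hI.subset_ground
  have hI'fin : I'.Finite := hfin.subset hI'basis.indep.subset_ground
  have hJfin : J.Finite := hfin.subset hJ.subset_ground
  have hencard : I'.encard = J.encard :=
    (hI'basis.restrict_isBase).encard_eq_encard_of_isBase (hJbasis.restrict_isBase)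
  have hIJenc : I.encard = J.encard := by
    rw [hIfin.encard_eq_coe, hJfin.encard_eq_coe, ← Set.ncard_def, ← Set.ncard_def, hcard]
  have hIcard : I.encard = I'.encard := by rw [hIJenc, hencard]
  have hIeq : I = I' := hI'fin.eq_of_subset_of_encard_le' hII' hIcard.ge
  rw [hIeq, hI'basis.closure_eq_closure, closure_closure]

end Matroid
namespace Matroid

variable {N : Matroid α} {C C₁ C₂ D P Q R : Set α} {a b e w y z : α}

lemma claimB (hfin : N.E.Finite)
    (hstab : ∀ x ∈ N.E, (N.del {x}).IsLaminar ∧ (N.con {x}).IsLaminar)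
    (h₁ : N.IsCircuit' C₁) (h₂ : N.IsCircuit' C₂)
    (hsing : C₁ ∩ C₂ = {e})
    (ha : a ∈ C₁) (hacl : a ∉ N.closure C₂)
    (hb : b ∈ C₂) (hbcl : b ∉ N.closure C₁)
    (hy : y ∈ C₂) (hycl : y ∈ N.closure C₁) (hye : y ≠ e) : False := by
  have he : e ∈ C₁ ∩ C₂ := hsing.symm ▸ mem_singleton e
  have heC₁ : e ∈ C₁ := he.1
  have heC₂ : e ∈ C₂ := he.2
  have hyC₁ : y ∉ C₁ := by
    intro h
    have h2 : y ∈ C₁ ∩ C₂ := ⟨h, hy⟩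
    rw [hsing, mem_singleton_iff] at h2
    exact hye h2
  have hae : a ≠ e := fun h => hacl (h ▸ N.subset_closure _ h₂.subset_ground heC₂)
  have hay : a ≠ y := fun h => hyC₁ (h ▸ ha)
  have hbe : b ≠ e := fun h => hbcl (h ▸ N.subset_closure _ h₁.subset_ground heC₁)
  have hby : b ≠ y := fun h => hbcl (h ▸ hycl)
  have hyE : y ∈ N.E := h₂.subset_ground hy
  have hyind : N.Indep {y} := by
    refine h₂.ssubset_indep ((singleton_subset_iff.2 hy).ssubset_of_ne ?_)
    intro h
    rw [← h, mem_singleton_iff] at heC₂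
    exact hye heC₂.symm
  have hclins : N.closure (insert y C₁) = N.closure C₁ := closure_insert_eq_of_mem_closure hycl
  -- Claim 2 : every circuit through y inside C₁ ∪ {y} that misses some non-e element of C₁
  -- is contained in (C₁ ∩ cl C₂) ∪ {y}.
  have claim2 : ∀ Q, N.IsCircuit' Q → y ∈ Q → Q ⊆ insert y C₁ →
      (∃ w, w ∈ C₁ ∧ w ≠ e ∧ w ∉ Q) → ∀ z ∈ Q, z ≠ y → z ∈ C₁ ∧ z ∈ N.closure C₂ := by
    intro Q hQ hyQ hQsub hw z hzQ hzy
    have hzC₁ : z ∈ C₁ := (hQsub hzQ).resolve_left hzy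
    refine ⟨hzC₁, ?_⟩
    have hclQ : N.closure Q ⊆ N.closure C₁ := by
      have h3 := N.closure_subset_closure hQsub
      rwa [hclins] at h3
    have hbQ : b ∉ N.closure Q := fun h => hbcl (hclQ h)
    by_cases heQ : e ∈ Q
    · have hlam := (hstab y hyE).2
      have hc₁ := hQ.con_diff_singleton hyind hyQ
      have hc₂ := h₂.con_diff_singleton hyind hy
      have heny : e ∉ ({y} : Set α) := by
        rw [mem_singleton_iff]; exact fun h => hye h.symm
      have hint' : ((Q \ {y}) ∩ (C₂ \ {y})).Nonempty := ⟨e, ⟨heQ, heny⟩, ⟨heC₂, heny⟩⟩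
      have hclo : ∀ C, C ⊆ N.E → y ∈ C →
          (N.con {y}).closure (C \ {y}) = N.closure C \ {y} := by
        intro C hC hyC
        rw [con_singleton_closure hyind (diff_subset_diff_left hC),
          insert_diff_singleton, insert_eq_of_mem hyC]
      rcases hlam _ _ hc₁ hc₂ hint' with hc | hc <;>
        rw [hclo _ hQ.subset_ground hyQ, hclo _ h₂.subset_ground hy] at hc
      · have hz : z ∈ N.closure Q \ {y} :=
          ⟨N.subset_closure _ hQ.subset_ground hzQ, by rw [mem_singleton_iff]; exact hzy⟩
        exact (hc hz).1
      · have hbmem : b ∈ N.closure C₂ \ {y} :=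
          ⟨N.subset_closure _ h₂.subset_ground hb, by rw [mem_singleton_iff]; exact hby⟩
        exact absurd ((hc hbmem).1) hbQ
    · have hintQ : (Q ∩ C₂).Nonempty := ⟨y, hyQ, hy⟩
      rcases pair_dichotomy hfin hstab hQ h₂ hintQ with hc | hc | hc
      · exact hc (N.subset_closure _ hQ.subset_ground hzQ)
      · exact absurd (hc (N.subset_closure _ h₂.subset_ground hb)) hbQ
      · obtain ⟨w, hwC₁, hwe, hwQ⟩ := hw
        have hwE : w ∈ N.E := h₁.subset_ground hwC₁
        have hwU : w ∈ Q ∪ C₂ := by rw [hc.1]; exact hwE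
        rcases hwU with h | h
        · exact (hwQ h).elim
        · refine (hwe ?_).elim
          have h4 : w ∈ C₁ ∩ C₂ := ⟨hwC₁, h⟩
          rw [hsing, mem_singleton_iff] at h4
          exact h4
  -- the circuit P avoiding a
  have hC₁a : N.Indep (C₁ \ {a}) := h₁.diff_singleton_indep ha
  have hyP : y ∈ N.closure (C₁ \ {a}) := by
    rw [h₁.closure_diff_singleton ha]; exact hycl
  obtain ⟨P, hP, hyPmem, hPsub⟩ := hC₁a.exists_isCircuit'_of_mem_closure
    (hfin.subset hC₁a.subset_ground) hyP (fun h => hyC₁ h.1)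
  have hPsub' : P ⊆ insert y C₁ := hPsub.trans (insert_subset_insert diff_subset)
  have haP : a ∉ P := by
    intro h
    rcases hPsub h with h' | h'
    · exact hay (mem_singleton_iff.1 h')
    · exact h'.2 rfl
  have hPprops := claim2 P hP hyPmem hPsub' ⟨a, ha, hae, haP⟩
  -- pick w₀ ∈ P with w₀ ≠ y, w₀ ≠ e
  obtain ⟨w₀, hw₀P, hw₀y, hw₀e⟩ : ∃ w₀, w₀ ∈ P ∧ w₀ ≠ y ∧ w₀ ≠ e := by
    by_contra hcon
    push_neg at hcon
    have hPsub2 : P ⊆ ({y, e} : Set α) := by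
      intro t ht
      by_cases h1 : t = y
      · exact Or.inl h1
      · exact Or.inr (hcon t ht h1)
    have hPC₂ : P ⊆ C₂ := by
      intro t ht
      rcases hPsub2 ht with h | h
      · rw [h]; exact hy
      · rw [h]; exact heC₂
    have hPeq : P = C₂ := h₂.eq_of_subset hP hPC₂
    rw [← hPeq] at hb
    rcases hPsub2 hb with h | h
    · exact hby (mem_singleton_iff.1 h)
    · exact hbe (mem_singleton_iff.1 h)
  have hw₀C₁ : w₀ ∈ C₁ := (hPsub' hw₀P).resolve_left hw₀y
  -- the circuit Q avoiding w₀
  have hC₁w : N.Indep (C₁ \ {w₀}) := h₁.diff_singleton_indep hw₀C₁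
  have hyQ2 : y ∈ N.closure (C₁ \ {w₀}) := by
    rw [h₁.closure_diff_singleton hw₀C₁]; exact hycl
  obtain ⟨Q, hQ, hyQmem, hQsub⟩ := hC₁w.exists_isCircuit'_of_mem_closure
    (hfin.subset hC₁w.subset_ground) hyQ2 (fun h => hyC₁ h.1)
  have hQsub' : Q ⊆ insert y C₁ := hQsub.trans (insert_subset_insert diff_subset)
  have hw₀Q : w₀ ∉ Q := by
    intro h
    rcases hQsub h with h' | h'
    · exact hw₀y (mem_singleton_iff.1 h')
    · exact h'.2 rfl
  have hQprops := claim2 Q hQ hyQmem hQsub' ⟨w₀, hw₀C₁, hw₀e, hw₀Q⟩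
  -- strong elimination
  have hPQfin : (P ∪ Q).Finite := hfin.subset (union_subset hP.subset_ground hQ.subset_ground)
  obtain ⟨R, hR, hw₀R, hRsub⟩ := hP.strong_elimination hQ hPQfin ⟨hw₀P, hw₀Q⟩ hyQmem
  have hRsubF : R ⊆ C₁ \ {a} := by
    intro t ht
    have ht1 : t ∈ P ∪ Q := (hRsub ht).1
    have hty : t ≠ y := fun h => (hRsub ht).2 (by rw [mem_singleton_iff]; exact h)
    have htprops : t ∈ C₁ ∧ t ∈ N.closure C₂ := by
      rcases ht1 with h | h
      · exact hPprops t h hty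
      · exact hQprops t h hty
    exact ⟨htprops.1, fun hta => hacl (mem_singleton_iff.1 hta ▸ htprops.2)⟩
  exact hR.dep.not_indep (hC₁a.subset hRsubF)

end Matroid
namespace Matroid

variable {N : Matroid α} {C C₁ C₂ D P Q R S : Set α} {a b e w x y z : α}

lemma exists_third (h₁ : N.IsCircuit' C₁) (h₂ : N.IsCircuit' C₂)
    (ha : a ∈ C₁) (hacl : a ∉ N.closure C₂) (heC₂ : e ∈ C₂) :
    ∃ c₃, c₃ ∈ C₁ ∧ c₃ ∉ ({e, a} : Set α) := by
  by_contra hcon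
  push_neg at hcon
  have hsub : C₁ \ {a} ⊆ {e} := by
    intro t ht
    rcases hcon t ht.1 with h | h
    · exact h
    · exact absurd h ht.2
  have h5 : a ∈ N.closure (C₁ \ {a}) := h₁.mem_closure_diff_singleton ha
  have h6 : N.closure (C₁ \ {a}) ⊆ N.closure C₂ :=
    (N.closure_subset_closure hsub).trans
      (N.closure_subset_closure (singleton_subset_iff.2 heC₂))
  exact hacl (h6 h5)

lemma rogue_impossible (hfin : N.E.Finite)
    (hstab : ∀ x ∈ N.E, (N.del {x}).IsLaminar ∧ (N.con {x}).IsLaminar)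
    (h₁ : N.IsCircuit' C₁) (h₂ : N.IsCircuit' C₂)
    (hE : N.E = C₁ ∪ C₂) (hsing : C₁ ∩ C₂ = {e})
    (ha : a ∈ C₁) (hacl : a ∉ N.closure C₂)
    (hb : b ∈ C₂) (hbcl : b ∉ N.closure C₁)
    (hF : ∀ z ∈ C₁, z ∈ N.closure C₂ → z = e)
    (hD : N.IsCircuit' D) (hD₂ : D ≠ C₂)
    (hun : D ∪ C₁ = N.E) (hsub : ∀ f ∈ D ∩ C₁, ∀ g ∈ D ∩ C₁, f = g) : False := by
  have he : e ∈ C₁ ∩ C₂ := hsing.symm ▸ mem_singleton e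
  have heC₁ : e ∈ C₁ := he.1
  have heC₂ : e ∈ C₂ := he.2
  have hae : a ≠ e := fun h => hacl (h ▸ N.subset_closure _ h₂.subset_ground heC₂)
  have hC₂fin : C₂.Finite := hfin.subset h₂.subset_ground
  have hDfin : D.Finite := hfin.subset hD.subset_ground
  -- D meets C₁
  obtain ⟨w, hw⟩ : (D ∩ C₁).Nonempty := by
    rcases eq_empty_or_nonempty (D ∩ C₁) with hemp | hne
    · exfalso
      have hDC₂ : D ⊆ C₂ := by
        intro t ht
        have htE : t ∈ N.E := hD.subset_ground ht
        rw [hE] at htE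
        rcases htE with h | h
        · exfalso
          have hmem : t ∈ D ∩ C₁ := ⟨ht, h⟩
          rw [hemp] at hmem
          exact hmem
        · exact h
      exact hD₂ (h₂.eq_of_subset hD hDC₂)
    · exact hne
  have hCsubD : C₂ \ {e} ⊆ D := by
    intro t ht
    have htE : t ∈ N.E := h₂.subset_ground ht.1
    rw [← hun] at htE
    rcases htE with h | h
    · exact h
    · exact absurd (show t ∈ ({e} : Set α) from hsing ▸ ⟨h, ht.1⟩) ht.2
  have hwe : w ≠ e := by
    intro h
    have hC₂D : C₂ ⊆ D := by
      intro t ht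
      by_cases hte : t = e
      · rw [hte, ← h]; exact hw.1
      · exact hCsubD ⟨ht, hte⟩
    exact hD₂ (hD.eq_of_subset h₂ hC₂D).symm
  have hwC₂ : w ∉ C₂ := by
    intro h
    exact hwe (show w ∈ ({e} : Set α) from hsing ▸ ⟨hw.2, h⟩)
  have hDeq : D = insert w (C₂ \ {e}) := by
    apply Subset.antisymm
    · intro t ht
      have htE : t ∈ N.E := hD.subset_ground ht
      rw [hE] at htE
      rcases htE with h | h
      · exact Or.inl (hsub t ⟨ht, h⟩ w hw)
      · by_cases hte : t = e
        · exact absurd (hsub e ⟨hte ▸ ht, heC₁⟩ w hw).symm hwe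
        · exact Or.inr ⟨h, hte⟩
    · exact insert_subset hw.1 hCsubD
  have hcard : D.ncard = C₂.ncard := by
    rw [hDeq, Set.ncard_insert_of_notMem (fun hh => hwC₂ hh.1) (hC₂fin.diff),
      Set.ncard_diff_singleton_of_mem heC₂]
    have hpos : 0 < C₂.ncard := (Set.ncard_pos hC₂fin).2 ⟨e, heC₂⟩
    omega
  have hbe : b ≠ e := fun h => hbcl (h ▸ N.subset_closure _ h₁.subset_ground heC₁)
  have hint₂ : (D ∩ C₂).Nonempty := ⟨b, hCsubD ⟨hb, hbe⟩, hb⟩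
  have hclDC : N.closure D = N.closure C₂ := by
    obtain ⟨d₀, hd₀⟩ := hD.nonempty
    have hDd : N.Indep (D \ {d₀}) := hD.diff_singleton_indep hd₀
    have hCc : N.Indep (C₂ \ {e}) := h₂.diff_singleton_indep heC₂
    have hcard' : (D \ {d₀}).ncard = (C₂ \ {e}).ncard := by
      rw [Set.ncard_diff_singleton_of_mem hd₀,
        Set.ncard_diff_singleton_of_mem heC₂, hcard]
    rcases pair_dichotomy hfin hstab hD h₂ hint₂ with hc | hc | hc
    · have h5 : D \ {d₀} ⊆ N.closure (C₂ \ {e}) := by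
        rw [h₂.closure_diff_singleton heC₂]
        exact fun t ht => hc (N.subset_closure _ hD.subset_ground ht.1)
      have h6 := closure_eq_closure_of_indep_card hfin hDd hCc h5 hcard'
      rwa [hD.closure_diff_singleton hd₀, h₂.closure_diff_singleton heC₂] at h6
    · have h5 : C₂ \ {e} ⊆ N.closure (D \ {d₀}) := by
        rw [hD.closure_diff_singleton hd₀]
        exact fun t ht => hc (N.subset_closure _ h₂.subset_ground ht.1)
      have h6 := closure_eq_closure_of_indep_card hfin hCc hDd h5 hcard'.symm
      rw [hD.closure_diff_singleton hd₀, h₂.closure_diff_singleton heC₂] at h6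
      exact h6.symm
    · exfalso
      have hC₁subD : C₁ \ {e} ⊆ D := by
        intro t ht
        have htE : t ∈ N.E := h₁.subset_ground ht.1
        rw [← hc.1] at htE
        rcases htE with h | h
        · exact h
        · exact absurd (show t ∈ ({e} : Set α) from hsing ▸ ⟨ht.1, h⟩) ht.2
      obtain ⟨c₃, hc₃C, hc₃⟩ := exists_third h₁ h₂ ha hacl heC₂
      have hc₃e : c₃ ≠ e := fun h => hc₃ (Or.inl h)
      have h7 := hsub a ⟨hC₁subD ⟨ha, hae⟩, ha⟩ c₃ ⟨hC₁subD ⟨hc₃C, hc₃e⟩, hc₃C⟩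
      exact hc₃ (Or.inr h7.symm)
  have hwcl : w ∈ N.closure C₂ := by
    rw [← hclDC]
    exact N.subset_closure _ hD.subset_ground hw.1
  exact hwe (hF w hw.2 hwcl)

end Matroid
namespace Matroid

variable {N : Matroid α} {C C₁ C₂ D S : Set α} {a b e w x y z : α}

lemma classification (hfin : N.E.Finite)
    (hstab : ∀ x ∈ N.E, (N.del {x}).IsLaminar ∧ (N.con {x}).IsLaminar)
    (h₁ : N.IsCircuit' C₁) (h₂ : N.IsCircuit' C₂)
    (hE : N.E = C₁ ∪ C₂) (hsing : C₁ ∩ C₂ = {e})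
    (ha : a ∈ C₁) (hacl : a ∉ N.closure C₂)
    (hb : b ∈ C₂) (hbcl : b ∉ N.closure C₁)
    (hF : ∀ z ∈ C₁, z ∈ N.closure C₂ → z = e)
    (hG : ∀ z ∈ C₂, z ∈ N.closure C₁ → z = e)
    (hD : N.IsCircuit' D) (hD₁ : D ≠ C₁) (hD₂ : D ≠ C₂) : N.E ⊆ N.closure D := by
  have he : e ∈ C₁ ∩ C₂ := hsing.symm ▸ mem_singleton e
  have heC₁ : e ∈ C₁ := he.1
  have heC₂ : e ∈ C₂ := he.2
  have hae : a ≠ e := fun h => hacl (h ▸ N.subset_closure _ h₂.subset_ground heC₂)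
  have hsing' : C₂ ∩ C₁ = {e} := by rw [inter_comm]; exact hsing
  have hE' : N.E = C₂ ∪ C₁ := by rw [union_comm]; exact hE
  have hint₁ : (D ∩ C₁).Nonempty := by
    rcases eq_empty_or_nonempty (D ∩ C₁) with hemp | hne
    · exfalso
      have hDC₂ : D ⊆ C₂ := by
        intro t ht
        have htE : t ∈ N.E := hD.subset_ground ht
        rw [hE] at htE
        rcases htE with h | h
        · exfalso
          have hmem : t ∈ D ∩ C₁ := ⟨ht, h⟩
          rw [hemp] at hmem
          exact hmem
        · exact h
      exact hD₂ (h₂.eq_of_subset hD hDC₂)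
    · exact hne
  have hint₂ : (D ∩ C₂).Nonempty := by
    rcases eq_empty_or_nonempty (D ∩ C₂) with hemp | hne
    · exfalso
      have hDC₁ : D ⊆ C₁ := by
        intro t ht
        have htE : t ∈ N.E := hD.subset_ground ht
        rw [hE] at htE
        rcases htE with h | h
        · exact h
        · exfalso
          have hmem : t ∈ D ∩ C₂ := ⟨ht, h⟩
          rw [hemp] at hmem
          exact hmem
      exact hD₁ (h₁.eq_of_subset hD hDC₁)
    · exact hne
  rcases pair_dichotomy hfin hstab hD h₁ hint₁ with p1 | p1 | p1
  · rcases pair_dichotomy hfin hstab hD h₂ hint₂ with p2 | p2 | p2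
    · -- D ⊆ cl C₁ ∩ cl C₂ : impossible
      exfalso
      have hDsube : D ⊆ {e} := by
        intro t ht
        have htcl₁ : t ∈ N.closure C₁ := p1 (N.subset_closure _ hD.subset_ground ht)
        have htcl₂ : t ∈ N.closure C₂ := p2 (N.subset_closure _ hD.subset_ground ht)
        have htE : t ∈ N.E := hD.subset_ground ht
        rw [hE] at htE
        rcases htE with h | h
        · exact mem_singleton_iff.2 (hF t h htcl₂)
        · exact mem_singleton_iff.2 (hG t h htcl₁)
      obtain ⟨d₀, hd₀⟩ := hD.nonempty
      have hde : d₀ = e := mem_singleton_iff.1 (hDsube hd₀)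
      have hDeq : D = {e} := Subset.antisymm hDsube (by rw [← hde]; exact singleton_subset_iff.2 hd₀)
      have heind : N.Indep {e} := by
        refine h₁.ssubset_indep ((singleton_subset_iff.2 heC₁).ssubset_of_ne ?_)
        intro h
        rw [← h, mem_singleton_iff] at ha
        exact hae ha
      exact hD.dep.not_indep (hDeq ▸ heind)
    · exact absurd (p1 (p2 (N.subset_closure _ h₂.subset_ground hb))) hbcl
    · exact (rogue_impossible hfin hstab h₂ h₁ hE' hsing' hb hbcl ha hacl hG hD hD₁ p2.1 p2.2).elim
  · rcases pair_dichotomy hfin hstab hD h₂ hint₂ with p2 | p2 | p2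
    · exact absurd (p2 (p1 (N.subset_closure _ h₁.subset_ground ha))) hacl
    · intro t ht
      rw [hE] at ht
      rcases ht with h | h
      · exact p1 (N.subset_closure _ h₁.subset_ground h)
      · exact p2 (N.subset_closure _ h₂.subset_ground h)
    · exact (rogue_impossible hfin hstab h₂ h₁ hE' hsing' hb hbcl ha hacl hG hD hD₁ p2.1 p2.2).elim
  · exact (rogue_impossible hfin hstab h₁ h₂ hE hsing ha hacl hb hbcl hF hD hD₂ p1.1 p1.2).elim

lemma spanning_lemma (hfin : N.E.Finite)
    (hstab : ∀ x ∈ N.E, (N.del {x}).IsLaminar ∧ (N.con {x}).IsLaminar)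
    (h₁ : N.IsCircuit' C₁) (h₂ : N.IsCircuit' C₂)
    (hE : N.E = C₁ ∪ C₂) (hsing : C₁ ∩ C₂ = {e})
    (ha : a ∈ C₁) (hacl : a ∉ N.closure C₂)
    (hb : b ∈ C₂) (hbcl : b ∉ N.closure C₁)
    (hF : ∀ z ∈ C₁, z ∈ N.closure C₂ → z = e)
    (hG : ∀ z ∈ C₂, z ∈ N.closure C₁ → z = e) :
    N.E ⊆ N.closure (insert b C₁) := by
  have he : e ∈ C₁ ∩ C₂ := hsing.symm ▸ mem_singleton e
  have heC₁ : e ∈ C₁ := he.1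
  have heC₂ : e ∈ C₂ := he.2
  have hbe : b ≠ e := fun h => hbcl (h ▸ N.subset_closure _ h₁.subset_ground heC₁)
  have hC₁cl : C₁ ⊆ N.closure (insert b C₁) :=
    (subset_insert _ _).trans (N.subset_closure _ (insert_subset (h₂.subset_ground hb)
      h₁.subset_ground))
  intro x hx
  have hxE : x ∈ N.E := hx
  rw [hE] at hx
  rcases hx with hxC₁ | hxC₂
  · exact hC₁cl hxC₁
  by_cases hxe : x = e
  · exact hC₁cl (hxe ▸ heC₁)
  by_cases hxb : x = b
  · exact hxb ▸ N.subset_closure _ (insert_subset (h₂.subset_ground hb) h₁.subset_ground)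
      (mem_insert _ _)
  have hxC₁ : x ∉ C₁ := by
    intro h
    exact hxe (show x ∈ ({e} : Set α) from hsing ▸ ⟨h, hxC₂⟩)
  have hax : a ≠ x := by
    intro h
    exact hacl (h ▸ N.subset_closure _ h₂.subset_ground hxC₂)
  -- enough : b ∈ cl (insert x C₁)
  suffices hbx : b ∈ N.closure (insert x C₁) by
    have hxch := Matroid.closure_exchange (M := N) (e := b) (f := x) (X := C₁) ⟨hbx, hbcl⟩
    exact hxch.1
  by_cases hα : ∃ S, N.IsCircuit' S ∧ x ∈ S ∧ S ⊆ insert x C₁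
  · obtain ⟨S, hS, hxS, hSsub⟩ := hα
    have hSC₁ : S ≠ C₁ := fun h => hxC₁ (h ▸ hxS)
    have hSC₂ : S ≠ C₂ := by
      intro h
      have hbmem : b ∈ insert x C₁ := hSsub (h ▸ hb)
      rcases hbmem with h' | h'
      · exact hxb h'.symm
      · exact hbe (show b ∈ ({e} : Set α) from hsing ▸ ⟨h', hb⟩)
    have hcl := classification hfin hstab h₁ h₂ hE hsing ha hacl hb hbcl hF hG hS hSC₁ hSC₂
    have hbS : b ∈ N.closure S := hcl (h₂.subset_ground hb)
    exact (N.closure_subset_closure hSsub) hbS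
  · have hxind : N.Indep {x} := by
      refine h₂.ssubset_indep ((singleton_subset_iff.2 hxC₂).ssubset_of_ne ?_)
      intro h
      rw [← h, mem_singleton_iff] at heC₂
      exact hxe heC₂.symm
    have hC₁con : (N.con {x}).IsCircuit' C₁ :=
      isCircuit'_con_of_forall hxind hfin h₁ hxC₁
        (fun C' hC' hsubC' hxC' => hα ⟨C', hC', hxC', hsubC'⟩)
    have hC₂con := h₂.con_diff_singleton hxind hxC₂
    have hint' : (C₁ ∩ (C₂ \ {x})).Nonempty := by
      refine ⟨e, heC₁, heC₂, ?_⟩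
      rw [mem_singleton_iff]
      exact fun h => hxe h.symm
    have hlam := (hstab x hxE).2
    have hclo₁ : (N.con {x}).closure C₁ = N.closure (insert x C₁) \ {x} :=
      con_singleton_closure hxind (subset_diff_singleton h₁.subset_ground hxC₁)
    have hclo₂ : (N.con {x}).closure (C₂ \ {x}) = N.closure C₂ \ {x} := by
      rw [con_singleton_closure hxind (diff_subset_diff_left h₂.subset_ground),
        insert_diff_singleton, insert_eq_of_mem hxC₂]
    rcases hlam _ _ hC₁con hC₂con hint' with hc | hc <;> rw [hclo₁, hclo₂] at hc
    · exfalso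
      have haa : a ∈ N.closure (insert x C₁) \ {x} := by
        refine ⟨N.subset_closure _ (insert_subset hxE h₁.subset_ground)
          (mem_insert_of_mem _ ha), ?_⟩
        rw [mem_singleton_iff]
        exact hax
      exact hacl (hc haa).1
    · have hbb : b ∈ N.closure C₂ \ {x} := by
        refine ⟨N.subset_closure _ h₂.subset_ground hb, ?_⟩
        rw [mem_singleton_iff]
        exact fun h => hxb h.symm
      exact (hc hbb).1

end Matroid
namespace Matroid

variable {N : Matroid α} {C C₁ C₂ D : Set α} {a b e x y z : α}

lemma ncard_eq_of_encard_eq {A B : Set α} (h : A.encard = B.encard) : A.ncard = B.ncard := by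
  rw [Set.ncard_def, Set.ncard_def, h]

lemma yrspec_of_stable (hfin : N.E.Finite) (hnl : ¬ N.IsLaminar)
    (hstab : ∀ x ∈ N.E, (N.del {x}).IsLaminar ∧ (N.con {x}).IsLaminar) :
    ∃ r C₁ C₂, 3 ≤ r ∧ YrSpec N r C₁ C₂ := by
  rw [Matroid.IsLaminar] at hnl
  push_neg at hnl
  obtain ⟨C₁, C₂, h₁, h₂, hint, hnc⟩ := hnl
  obtain ⟨hnc₁, hnc₂⟩ := hnc
  obtain ⟨hunion, hsub⟩ := witness_pair_lemma hfin hstab h₁ h₂ hint hnc₁ hnc₂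
  obtain ⟨e, he⟩ := hint
  have hsing : C₁ ∩ C₂ = {e} :=
    Subset.antisymm (fun t ht => mem_singleton_iff.2 (hsub t ht e he))
      (singleton_subset_iff.2 he)
  obtain ⟨a, ha, hacl⟩ := exists_witness h₁.subset_ground hnc₁
  obtain ⟨b, hb, hbcl⟩ := exists_witness h₂.subset_ground hnc₂
  have hE : N.E = C₁ ∪ C₂ := hunion.symm
  have hE' : N.E = C₂ ∪ C₁ := by rw [union_comm]; exact hE
  have hsing' : C₂ ∩ C₁ = {e} := by rw [inter_comm]; exact hsing
  have heC₁ : e ∈ C₁ := he.1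
  have heC₂ : e ∈ C₂ := he.2
  have hae : a ≠ e := fun h => hacl (h ▸ N.subset_closure _ h₂.subset_ground heC₂)
  have hbe : b ≠ e := fun h => hbcl (h ▸ N.subset_closure _ h₁.subset_ground heC₁)
  have hG : ∀ z ∈ C₂, z ∈ N.closure C₁ → z = e := by
    intro z hz hzcl
    by_contra hne
    exact claimB hfin hstab h₁ h₂ hsing ha hacl hb hbcl hz hzcl hne
  have hF : ∀ z ∈ C₁, z ∈ N.closure C₂ → z = e := by
    intro z hz hzcl
    by_contra hne
    exact claimB hfin hstab h₂ h₁ hsing' hb hbcl ha hacl hz hzcl hne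
  have hspan₁ : N.E ⊆ N.closure (insert b C₁) :=
    spanning_lemma hfin hstab h₁ h₂ hE hsing ha hacl hb hbcl hF hG
  have hspan₂ : N.E ⊆ N.closure (insert a C₂) :=
    spanning_lemma hfin hstab h₂ h₁ hE' hsing' hb hbcl ha hacl hG hF
  have hC₁fin : C₁.Finite := hfin.subset h₁.subset_ground
  have hC₂fin : C₂.Finite := hfin.subset h₂.subset_ground
  -- bases
  have hbB : b ∉ C₁ \ {e} := by
    intro h
    exact hbe (show b ∈ ({e} : Set α) from hsing ▸ ⟨h.1, hb⟩)
  have haB : a ∉ C₂ \ {e} := by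
    intro h
    exact hae (show a ∈ ({e} : Set α) from hsing' ▸ ⟨h.1, ha⟩)
  have hB₁ind : N.Indep (insert b (C₁ \ {e})) := by
    rw [(h₁.diff_singleton_indep heC₁).insert_indep_iff_of_notMem hbB]
    refine ⟨h₂.subset_ground hb, ?_⟩
    rw [h₁.closure_diff_singleton heC₁]
    exact hbcl
  have hB₂ind : N.Indep (insert a (C₂ \ {e})) := by
    rw [(h₂.diff_singleton_indep heC₂).insert_indep_iff_of_notMem haB]
    refine ⟨h₁.subset_ground ha, ?_⟩
    rw [h₂.closure_diff_singleton heC₂]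
    exact hacl
  have hclB : ∀ (C : Set α) (c : α), N.IsCircuit' C → e ∈ C → c ∈ N.E →
      N.closure (insert c (C \ {e})) = N.closure (insert c C) := by
    intro C c hC heC hcE
    have h5 : e ∈ N.closure (insert c (C \ {e})) := by
      have := hC.mem_closure_diff_singleton heC
      exact (N.closure_subset_closure (subset_insert _ _)) this
    rw [← closure_insert_eq_of_mem_closure h5, insert_comm, insert_diff_singleton,
      insert_eq_of_mem heC]
  have hB₁ : N.IsBase (insert b (C₁ \ {e})) := by
    refine hB₁ind.isBase_of_ground_subset_closure ?_
    rw [hclB C₁ b h₁ heC₁ (h₂.subset_ground hb)]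
    exact hspan₁
  have hB₂ : N.IsBase (insert a (C₂ \ {e})) := by
    refine hB₂ind.isBase_of_ground_subset_closure ?_
    rw [hclB C₂ a h₂ heC₂ (h₁.subset_ground ha)]
    exact hspan₂
  -- cardinalities
  have hC₁pos : 0 < C₁.ncard := (Set.ncard_pos hC₁fin).2 ⟨e, heC₁⟩
  have hC₂pos : 0 < C₂.ncard := (Set.ncard_pos hC₂fin).2 ⟨e, heC₂⟩
  have hB₁card : (insert b (C₁ \ {e})).ncard = C₁.ncard := by
    rw [Set.ncard_insert_of_notMem hbB (hC₁fin.diff),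
      Set.ncard_diff_singleton_of_mem heC₁]
    omega
  have hB₂card : (insert a (C₂ \ {e})).ncard = C₂.ncard := by
    rw [Set.ncard_insert_of_notMem haB (hC₂fin.diff),
      Set.ncard_diff_singleton_of_mem heC₂]
    omega
  have hmn : C₁.ncard = C₂.ncard := by
    have h5 := ncard_eq_of_encard_eq (hB₁.encard_eq_encard_of_isBase hB₂)
    rw [hB₁card, hB₂card] at h5
    exact h5
  -- r ≥ 3
  obtain ⟨c₃, hc₃C, hc₃⟩ := exists_third h₁ h₂ ha hacl heC₂
  have hc₃e : c₃ ≠ e := fun h => hc₃ (Or.inl h)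
  have hc₃a : c₃ ≠ a := fun h => hc₃ (Or.inr h)
  have hr3 : 3 ≤ C₁.ncard := by
    have hsub3 : ({c₃, a, e} : Set α) ⊆ C₁ := by
      intro t ht
      rcases ht with rfl | rfl | rfl
      · exact hc₃C
      · exact ha
      · exact heC₁
    have hcard3 : ({c₃, a, e} : Set α).ncard = 3 := by
      rw [Set.ncard_insert_of_notMem (by
          simp only [mem_insert_iff, mem_singleton_iff]
          rintro (rfl | rfl)
          · exact hc₃a rfl
          · exact hc₃e rfl) ((toFinite _))]
      rw [Set.ncard_insert_of_notMem (by rw [mem_singleton_iff]; exact hae) (toFinite _),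
        Set.ncard_singleton]
    calc 3 = ({c₃, a, e} : Set α).ncard := hcard3.symm
    _ ≤ C₁.ncard := Set.ncard_le_ncard hsub3 hC₁fin
  refine ⟨C₁.ncard, C₁, C₂, hr3, hC₁fin, hC₂fin, rfl, hmn.symm, ?_, hE, ?_⟩
  · rw [hsing]
    exact Set.ncard_singleton e
  intro I
  constructor
  · intro hI
    refine ⟨hE ▸ hI.subset_ground, ?_, h₁.not_subset hI, h₂.not_subset hI⟩
    obtain ⟨B', hB', hsubB'⟩ := hI.exists_isBase_superset
    have hB'fin : B'.Finite := hfin.subset hB'.subset_ground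
    have h5 : B'.ncard = C₁.ncard := by
      have h6 := ncard_eq_of_encard_eq (hB'.encard_eq_encard_of_isBase hB₁)
      rwa [hB₁card] at h6
    calc I.ncard ≤ B'.ncard := Set.ncard_le_ncard hsubB' hB'fin
    _ = C₁.ncard := h5
  · rintro ⟨hIE, hIcard, hnc1, hnc2⟩
    by_contra hnind
    have hdep : N.Dep I := ⟨hnind, hE ▸ hIE⟩
    obtain ⟨D, hD, hDI⟩ := hdep.exists_isCircuit'_subset (hfin.subset hdep.subset_ground)
    have hD₁ : D ≠ C₁ := fun h => hnc1 (h ▸ hDI)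
    have hD₂ : D ≠ C₂ := fun h => hnc2 (h ▸ hDI)
    have hspanD := classification hfin hstab h₁ h₂ hE hsing ha hacl hb hbcl hF hG hD hD₁ hD₂
    obtain ⟨d₀, hd₀⟩ := hD.nonempty
    have hDd : N.Indep (D \ {d₀}) := hD.diff_singleton_indep hd₀
    have hDbase : N.IsBase (D \ {d₀}) := by
      refine hDd.isBase_of_ground_subset_closure ?_
      rw [hD.closure_diff_singleton hd₀]
      exact hspanD
    have hDfin : D.Finite := hfin.subset hD.subset_ground
    have h5 : (D \ {d₀}).ncard = C₁.ncard := by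
      have h6 := ncard_eq_of_encard_eq (hDbase.encard_eq_encard_of_isBase hB₁)
      rwa [hB₁card] at h6
    have h7 : (D \ {d₀}).ncard = D.ncard - 1 := Set.ncard_diff_singleton_of_mem hd₀
    have h8 : 0 < D.ncard := (Set.ncard_pos hDfin).2 ⟨d₀, hd₀⟩
    have h9 : D.ncard ≤ I.ncard := Set.ncard_le_ncard hDI (hfin.subset (hE ▸ hIE))
    omega

end Matroid
lemma exists_yr_minor (n : ℕ) :
    ∀ N : Matroid α, N.E.Finite → N.E.ncard ≤ n → ¬ N.IsLaminar →
      ∃ N' r C₁ C₂, _root_.IsMinor N N' ∧ 3 ≤ r ∧ YrSpec N' r C₁ C₂ := by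
  induction n with
  | zero =>
    intro N hfin hcard hnl
    exfalso
    apply hnl
    intro C₁ C₂ h₁ h₂ hint
    exfalso
    obtain ⟨c, hc⟩ := h₁.nonempty
    have hcE : c ∈ N.E := h₁.subset_ground hc
    have hemp : N.E = ∅ := (Set.ncard_eq_zero hfin).1 (le_antisymm hcard (Nat.zero_le _))
    rw [hemp] at hcE
    exact hcE
  | succ n IH =>
    intro N hfin hcard hnl
    by_cases hstab : ∀ x ∈ N.E, (N.del {x}).IsLaminar ∧ (N.con {x}).IsLaminar
    · obtain ⟨r, C₁, C₂, hr, hspec⟩ := Matroid.yrspec_of_stable hfin hnl hstab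
      exact ⟨N, r, C₁, C₂, _root_.IsMinor.refl N, hr, hspec⟩
    · push_neg at hstab
      obtain ⟨x, hxE, hbad⟩ := hstab
      have hfin' : (N.E \ {x}).Finite := hfin.diff
      have hcard' : (N.E \ {x}).ncard ≤ n := by
        rw [Set.ncard_diff_singleton_of_mem hxE]
        have hpos : 0 < N.E.ncard := (Set.ncard_pos hfin).2 ⟨x, hxE⟩
        omega
      by_cases hdel : (N.del {x}).IsLaminar
      case neg =>
        obtain ⟨N', r, C₁, C₂, hmin, hr, hspec⟩ := IH (N.del {x}) hfin' hcard' hdel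
        exact ⟨N', r, C₁, C₂, (_root_.IsMinor.del N N x (_root_.IsMinor.refl N)).trans hmin, hr, hspec⟩
      have hcon := hbad hdel
      obtain ⟨N', r, C₁, C₂, hmin, hr, hspec⟩ := IH (N.con {x}) hfin' hcard' hcon
      exact ⟨N', r, C₁, C₂, (_root_.IsMinor.con N N x (_root_.IsMinor.refl N)).trans hmin, hr, hspec⟩


theorem stmt_16 (M : Matroid α) (hfin : M.E.Finite) :
    M.IsLaminar ↔ ∀ N, _root_.IsMinor M N → ∀ r, 3 ≤ r → ∀ C₁ C₂, ¬ YrSpec N r C₁ C₂ := by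
  constructor
  · intro hlam N hmin r hr C₁ C₂ hspec
    exact (hspec.not_isLaminar hr) (hmin.laminar_finite hfin hlam).1
  · intro h
    by_contra hnl
    obtain ⟨N', r, C₁, C₂, hmin, hr, hspec⟩ := exists_yr_minor M.E.ncard M hfin le_rfl hnl
    exact h N' hmin r hr C₁ C₂ hspec
end

section
/- Let M be a loopless laminar matroid with canonical presentation (E, 𝒜, c), with |E| ≥ 2. Then the following are equivalent: (i) M is connected; (ii) E ∈ 𝒜; (iii) M has a spanning circuit. -/
open Set

variable {α : Type*}

/-- `A` is essential in the presentation `(E, 𝒜, c)`: removing it changes the matroid. -/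
def Essential (E : Set α) (𝒜 : Set (Set α)) (c : Set α → ℕ) (A : Set α) : Prop :=
  ∃ I ⊆ E, (∀ B ∈ 𝒜, B ≠ A → (I ∩ B).ncard ≤ c B) ∧ c A < (I ∩ A).ncard

/-- A canonical presentation of a loopless laminar matroid: every member is essential. -/
def IsCanonical (E : Set α) (𝒜 : Set (Set α)) (c : Set α → ℕ) : Prop :=
  ∀ A ∈ 𝒜, Essential E 𝒜 c A

/-- A matroid is loopless if every singleton of the ground set is independent. -/
def Matroid.Loopless' (M : Matroid α) : Prop := ∀ e ∈ M.E, M.Indep {e}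

/-- Connectivity: every pair of distinct elements lies in a common circuit. -/
def Matroid.IsConnected' (M : Matroid α) : Prop :=
  ∀ e ∈ M.E, ∀ f ∈ M.E, e ≠ f → ∃ C, M.IsCircuit' C ∧ e ∈ C ∧ f ∈ C

private lemma count_le {α : Type*} (P : Finset (Set α)) :
    ∀ (S I : Set α), S.Finite → I.Finite →
    (∀ B ∈ P, ∀ B' ∈ P, B ≠ B' → Disjoint B B') →
    (∀ B ∈ P, (I ∩ B).ncard ≤ (S ∩ B).ncard) →
    (I \ ⋃₀ ↑P ⊆ S) → I.ncard ≤ S.ncard := by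
  classical
  induction P using Finset.induction_on with
  | empty =>
    intro S I hS _ _ _ hcov
    exact ncard_le_ncard (by simpa using hcov) hS
  | @insert B P hBP ih =>
    intro S I hS hI hd hle hcov
    have key : (I \ B).ncard ≤ (S \ B).ncard := by
      refine ih (S \ B) (I \ B) hS.diff hI.diff ?_ ?_ ?_
      · intro B1 hB1 B2 hB2 hne
        exact hd B1 (Finset.mem_insert_of_mem hB1) B2 (Finset.mem_insert_of_mem hB2) hne
      · intro B' hB'
        have hdisj : Disjoint B B' := hd B (Finset.mem_insert_self _ _) B'
          (Finset.mem_insert_of_mem hB') (fun h => hBP (h ▸ hB'))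
        have h1 : (I \ B) ∩ B' = I ∩ B' := by
          ext z
          simp only [mem_inter_iff, mem_diff]
          exact ⟨fun h => ⟨h.1.1, h.2⟩, fun h => ⟨⟨h.1, fun hz => (disjoint_left.mp hdisj hz) h.2⟩, h.2⟩⟩
        have h2 : (S \ B) ∩ B' = S ∩ B' := by
          ext z
          simp only [mem_inter_iff, mem_diff]
          exact ⟨fun h => ⟨h.1.1, h.2⟩, fun h => ⟨⟨h.1, fun hz => (disjoint_left.mp hdisj hz) h.2⟩, h.2⟩⟩
        rw [h1, h2]
        exact hle B' (Finset.mem_insert_of_mem hB')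
      · rintro x ⟨⟨hxI, hxB⟩, hxP⟩
        refine ⟨hcov ⟨hxI, ?_⟩, hxB⟩
        rw [Finset.coe_insert, sUnion_insert]
        rintro (h | h)
        · exact hxB h
        · exact hxP h
    have hI1 : (I ∩ B).ncard + (I \ B).ncard = I.ncard :=
      ncard_inter_add_ncard_diff_eq_ncard I B hI
    have hS1 : (S ∩ B).ncard + (S \ B).ncard = S.ncard :=
      ncard_inter_add_ncard_diff_eq_ncard S B hS
    have hB1 : (I ∩ B).ncard ≤ (S ∩ B).ncard := hle B (Finset.mem_insert_self _ _)
    omega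

theorem stmt_17 (E : Set α) (hE : E.Finite) (hE2 : 2 ≤ E.ncard)
    (𝒜 : Set (Set α)) (h𝒜E : ∀ A ∈ 𝒜, A ⊆ E) (h𝒜 : IsLaminarFamily 𝒜)
    (c : Set α → ℕ) (M : Matroid α) (hM : M.IsLaminarPresBy E 𝒜 c)
    (hcanon : IsCanonical E 𝒜 c) (hloop : M.Loopless') :
    (M.IsConnected' ↔ E ∈ 𝒜) ∧
      (E ∈ 𝒜 ↔ ∃ C, M.IsCircuit' C ∧ M.closure C = E) := by
  obtain ⟨hME, hInd⟩ := hM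
  have h𝒜fin : 𝒜.Finite := hE.finite_subsets.subset h𝒜E
  -- every singleton capacity is positive
  have hcpos : ∀ B ∈ 𝒜, ∀ x ∈ B, 1 ≤ c B := by
    intro B hB x hx
    have h1 := ((hInd {x}).mp (hloop x (by rw [hME]; exact h𝒜E B hB hx))).2 B hB
    rwa [inter_eq_self_of_subset_left (singleton_subset_iff.mpr hx), ncard_singleton] at h1
  -- capacities strictly increase along the laminar order
  have hcmono : ∀ A ∈ 𝒜, ∀ B ∈ 𝒜, A ⊆ B → A ≠ B → c A < c B := by
    intro A hA B hB hAB hne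
    obtain ⟨I, hIE, hIB, hIA⟩ := hcanon A hA
    by_contra hcon
    push_neg at hcon
    have h1 : (I ∩ A).ncard ≤ (I ∩ B).ncard :=
      ncard_le_ncard (inter_subset_inter_right _ hAB) ((hE.subset hIE).inter_of_left _)
    have h2 := hIB B hB (fun h => hne h.symm)
    omega
  -- every circuit is contained in some member of 𝒜, with size c A + 1
  have circuit_subset : ∀ C, M.IsCircuit' C → ∃ A ∈ 𝒜, C ⊆ A ∧ C.ncard = c A + 1 := by
    rintro C ⟨hdep, hmin⟩
    rw [Matroid.dep_iff] at hdep
    have hCE : C ⊆ E := hME ▸ hdep.2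
    have hCfin : C.Finite := hE.subset hCE
    have hnotind := hdep.1
    rw [hInd] at hnotind
    push_neg at hnotind
    obtain ⟨A, hA, hAlt⟩ := hnotind hCE
    have hCA : C ⊆ A := by
      intro x hx
      by_contra hxA
      have hss : C \ {x} ⊂ C := sdiff_singleton_ssubset.mpr hx
      have h1 := ((hInd _).mp (hmin _ hss)).2 A hA
      have h2 : (C \ {x}) ∩ A = C ∩ A := by
        ext z
        simp only [mem_inter_iff, mem_diff, mem_singleton_iff]
        exact ⟨fun h => ⟨h.1.1, h.2⟩, fun h => ⟨⟨h.1, fun hz => hxA (hz ▸ h.2)⟩, h.2⟩⟩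
      rw [h2] at h1
      omega
    have hCint : C ∩ A = C := inter_eq_self_of_subset_left hCA
    obtain ⟨z, hz⟩ : (C ∩ A).Nonempty := nonempty_of_ncard_ne_zero (by omega)
    have hss : C \ {z} ⊂ C := sdiff_singleton_ssubset.mpr hz.1
    have h1 := ((hInd _).mp (hmin _ hss)).2 A hA
    have h2 : (C \ {z}) ∩ A = (C ∩ A) \ {z} := by
      ext w
      simp only [mem_inter_iff, mem_diff, mem_singleton_iff]
      tauto
    rw [h2, ncard_diff_singleton_of_mem hz] at h1
    refine ⟨A, hA, hCA, ?_⟩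
    rw [← hCint]
    omega
  -- a set of size c E + 1 respecting all other constraints is a circuit
  have mk_circuit : E ∈ 𝒜 → ∀ S : Set α, S ⊆ E →
      (∀ B ∈ 𝒜, B ≠ E → (S ∩ B).ncard ≤ c B) → S.ncard = c E + 1 → M.IsCircuit' S := by
    intro hEA S hSE hfeas hcard
    constructor
    · rw [Matroid.dep_iff]
      refine ⟨fun hind => ?_, by rwa [hME]⟩
      have h1 := ((hInd S).mp hind).2 E hEA
      rw [inter_eq_self_of_subset_left hSE] at h1
      omega
    · intro D hD
      have hDS : D ⊆ S := hD.subset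
      have hDE : D ⊆ E := hDS.trans hSE
      rw [hInd]
      refine ⟨hDE, fun B hB => ?_⟩
      by_cases hBE : B = E
      · subst hBE
        rw [inter_eq_self_of_subset_left hDE]
        have h1 : D.ncard < S.ncard := ncard_lt_ncard hD (hE.subset hSE)
        omega
      · exact (ncard_le_ncard (inter_subset_inter_left _ hDS)
          ((hE.subset hSE).inter_of_left _)).trans (hfeas B hB hBE)
  -- (ii) → (iii)
  have hii_iii : E ∈ 𝒜 → ∃ C, M.IsCircuit' C ∧ M.closure C = E := by
    intro hEA
    obtain ⟨I, hIE, hIB, hIlt⟩ := hcanon E hEA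
    rw [inter_eq_self_of_subset_left hIE] at hIlt
    obtain ⟨C, hCI, hCcard⟩ := Set.exists_subset_card_eq (show c E + 1 ≤ I.ncard from hIlt)
    have hCE : C ⊆ E := hCI.trans hIE
    have hCfin : C.Finite := hE.subset hCE
    have hCfeas : ∀ B ∈ 𝒜, B ≠ E → (C ∩ B).ncard ≤ c B := fun B hB hne =>
      (ncard_le_ncard (inter_subset_inter_left _ hCI)
        ((hE.subset hIE).inter_of_left _)).trans (hIB B hB hne)
    have hcirc := mk_circuit hEA C hCE hCfeas hCcard
    refine ⟨C, hcirc, ?_⟩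
    apply subset_antisymm
    · rw [← hME]; exact M.closure_subset_ground C
    · intro x hxE
      by_cases hxC : x ∈ C
      · exact M.subset_closure C (by rwa [hME]) hxC
      · obtain ⟨y, hy⟩ : C.Nonempty := nonempty_of_ncard_ne_zero (by omega)
        have hCy : M.Indep (C \ {y}) := hcirc.2 _ (sdiff_singleton_ssubset.mpr hy)
        have hdep : M.Dep (insert x (C \ {y})) := by
          rw [Matroid.dep_iff]
          refine ⟨fun hind => ?_, ?_⟩
          swap
          · rw [hME]
            exact insert_subset hxE (diff_subset.trans hCE)
          have h1 := ((hInd _).mp hind).2 E hEA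
          have heq : insert x (C \ {y}) ∩ E = insert x (C \ {y}) :=
            inter_eq_self_of_subset_left (insert_subset hxE (diff_subset.trans hCE))
          have hxny : x ∉ C \ {y} := fun h => hxC h.1
          rw [heq, ncard_insert_of_notMem hxny hCfin.diff,
            ncard_diff_singleton_of_mem hy] at h1
          omega
        have hx : x ∈ M.closure (C \ {y}) := hCy.mem_closure_iff.mpr (Or.inl hdep)
        exact M.closure_mono diff_subset hx
  -- (iii) → (ii)
  have hiii_ii : (∃ C, M.IsCircuit' C ∧ M.closure C = E) → E ∈ 𝒜 := by
    rintro ⟨C, hC, hcl⟩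
    obtain ⟨A, hA, hCA, hCcard⟩ := circuit_subset C hC
    have hAE := h𝒜E A hA
    have hCE : C ⊆ E := hCA.trans hAE
    have hCfin : C.Finite := hE.subset hCE
    have hEA : E ⊆ A := by
      intro x hxE
      by_contra hxA
      have hxC : x ∉ C := fun h => hxA (hCA h)
      obtain ⟨y, hy⟩ : C.Nonempty := nonempty_of_ncard_ne_zero (by omega)
      have hCy : M.Indep (C \ {y}) := hC.2 _ (sdiff_singleton_ssubset.mpr hy)
      have hxcl : x ∈ M.closure C := by rw [hcl]; exact hxE
      have hCsub : C ⊆ M.closure (C \ {y}) := by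
        intro z hz
        by_cases hzy : z = y
        · subst hzy
          refine hCy.mem_closure_iff.mpr (Or.inl ?_)
          rw [insert_diff_singleton, insert_eq_of_mem hz]
          exact hC.1
        · exact M.subset_closure _ (by rw [hME]; exact diff_subset.trans hCE) ⟨hz, hzy⟩
      have hxcl' : x ∈ M.closure (C \ {y}) :=
        M.closure_subset_closure_of_subset_closure hCsub hxcl
      have hind : M.Indep (insert x (C \ {y})) := by
        rw [hInd]
        refine ⟨insert_subset hxE (diff_subset.trans hCE), fun B hB => ?_⟩
        by_cases hxB : x ∈ B
        · by_cases hBA : (B ∩ A).Nonempty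
          · rcases h𝒜 B hB A hA hBA with hBsub | hAsub
            · exact absurd (hBsub hxB) hxA
            · have hne : A ≠ B := fun h => hxA (h ▸ hxB)
              have hlt := hcmono A hA B hB hAsub hne
              have h1 : (insert x (C \ {y}) ∩ B).ncard ≤ (insert x (C \ {y})).ncard :=
                ncard_le_ncard inter_subset_left (hCfin.diff.insert x)
              have h2 : (insert x (C \ {y})).ncard ≤ (C \ {y}).ncard + 1 := ncard_insert_le _ _
              have h3 : (C \ {y}).ncard = c A := by
                rw [ncard_diff_singleton_of_mem hy]; omega
              omega
          · have hsub : insert x (C \ {y}) ∩ B ⊆ {x} := by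
              rintro z ⟨hz, hzB⟩
              rcases hz with rfl | hzC
              · exact rfl
              · exact absurd ⟨z, hzB, hCA hzC.1⟩ hBA
            have h1 : (insert x (C \ {y}) ∩ B).ncard ≤ 1 := by
              calc (insert x (C \ {y}) ∩ B).ncard ≤ ({x} : Set α).ncard :=
                    ncard_le_ncard hsub (finite_singleton x)
                _ = 1 := ncard_singleton x
            exact h1.trans (hcpos B hB x hxB)
        · have heq : insert x (C \ {y}) ∩ B = (C \ {y}) ∩ B := by
            ext z
            simp only [mem_inter_iff, mem_insert_iff]
            exact ⟨fun h => ⟨h.1.resolve_left (fun hzx => hxB (hzx ▸ h.2)), h.2⟩,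
              fun h => ⟨Or.inr h.1, h.2⟩⟩
          rw [heq]
          exact ((hInd _).mp hCy).2 B hB
      rcases hCy.mem_closure_iff.mp hxcl' with hdep | hmem
      · exact hdep.not_indep hind
      · exact hxC hmem.1
    have hfin : A = E := subset_antisymm hAE hEA
    rwa [← hfin]
  -- (i) → (ii)
  have hi_ii : M.IsConnected' → E ∈ 𝒜 := by
    intro hconn
    obtain ⟨e, f0, he, hf0, hef0⟩ := (Set.one_lt_ncard_iff hE).mp hE2
    have hpair : ∀ f ∈ E, f ≠ e → ∃ A, (A ∈ 𝒜 ∧ e ∈ A) ∧ f ∈ A := by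
      intro f hf hfe
      obtain ⟨C, hC, heC, hfC⟩ := hconn e (hME ▸ he) f (hME ▸ hf) (fun h => hfe h.symm)
      obtain ⟨A, hA, hCA, _⟩ := circuit_subset C hC
      exact ⟨A, ⟨hA, hCA heC⟩, hCA hfC⟩
    set 𝒞 := {A | A ∈ 𝒜 ∧ e ∈ A} with h𝒞
    have h𝒞ne : 𝒞.Nonempty := by
      obtain ⟨A, hA, _⟩ := hpair f0 hf0 (fun h => hef0 h.symm)
      exact ⟨A, hA⟩
    have h𝒞fin : 𝒞.Finite := h𝒜fin.subset (fun A hA => hA.1)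
    obtain ⟨Am, hAm, hmax⟩ := Set.Finite.exists_maximalFor id 𝒞 h𝒞fin h𝒞ne
    have hEAm : E ⊆ Am := by
      intro x hx
      by_cases hxe : x = e
      · subst hxe; exact hAm.2
      · obtain ⟨A, hA, hxA⟩ := hpair x hx hxe
        rcases h𝒜 A hA.1 Am hAm.1 ⟨e, hA.2, hAm.2⟩ with h | h
        · exact h hxA
        · have heq : Am = A := subset_antisymm h (hmax hA h)
          rw [heq]; exact hxA
    have hfin : Am = E := subset_antisymm (h𝒜E _ hAm.1) hEAm
    rw [← hfin]; exact hAm.1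
  -- augmentation for the family 𝒜 \ {E}
  have aug : ∀ S I : Set α, S ⊆ E → (∀ B ∈ 𝒜, B ≠ E → (S ∩ B).ncard ≤ c B) →
      I ⊆ E → (∀ B ∈ 𝒜, B ≠ E → (I ∩ B).ncard ≤ c B) → S.ncard < I.ncard →
      ∃ x, x ∈ I ∧ x ∉ S ∧ insert x S ⊆ E ∧
        (∀ B ∈ 𝒜, B ≠ E → ((insert x S) ∩ B).ncard ≤ c B) := by
    intro S I hSE hSf hIE hIf hlt
    have hSfin : S.Finite := hE.subset hSE
    have hIfin : I.Finite := hE.subset hIE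
    by_contra hno
    push_neg at hno
    have htight : ∀ x, x ∈ I → x ∉ S →
        ∃ B, B ∈ 𝒜 ∧ B ≠ E ∧ x ∈ B ∧ (S ∩ B).ncard = c B := by
      intro x hxI hxS
      obtain ⟨B, hB, hBE, hlt'⟩ := hno x hxI hxS (insert_subset (hIE hxI) hSE)
      have hxB : x ∈ B := by
        by_contra hxB
        have heq : insert x S ∩ B = S ∩ B := by
          ext z
          simp only [mem_inter_iff, mem_insert_iff]
          exact ⟨fun h => ⟨h.1.resolve_left (fun hzx => hxB (hzx ▸ h.2)), h.2⟩,
            fun h => ⟨Or.inr h.1, h.2⟩⟩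
        rw [heq] at hlt'
        exact absurd (hSf B hB hBE) (not_le.mpr hlt')
      have h1 : (insert x S ∩ B).ncard ≤ (S ∩ B).ncard + 1 := by
        have hsub : insert x S ∩ B ⊆ insert x (S ∩ B) := by
          rintro z ⟨hz, hzB⟩
          rcases hz with rfl | hzS
          · exact mem_insert _ _
          · exact mem_insert_of_mem _ ⟨hzS, hzB⟩
        calc (insert x S ∩ B).ncard ≤ (insert x (S ∩ B)).ncard :=
              ncard_le_ncard hsub ((hSfin.inter_of_left _).insert x)
          _ ≤ (S ∩ B).ncard + 1 := ncard_insert_le _ _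
      have h2 := hSf B hB hBE
      exact ⟨B, hB, hBE, hxB, by omega⟩
    set T := {B | B ∈ 𝒜 ∧ B ≠ E ∧ (S ∩ B).ncard = c B} with hT
    have hTfin : T.Finite := h𝒜fin.subset fun B hB => hB.1
    have hmaxmem : ∀ x, x ∈ I → x ∉ S →
        ∃ B ∈ T, x ∈ B ∧ ∀ B' ∈ T, B ⊆ B' → B = B' := by
      intro x hxI hxS
      obtain ⟨B0, hB0, hB0E, hxB0, hB0t⟩ := htight x hxI hxS
      have hT0fin : {B | B ∈ T ∧ B0 ⊆ B}.Finite := hTfin.subset fun B hB => hB.1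
      have hT0ne : {B | B ∈ T ∧ B0 ⊆ B}.Nonempty := ⟨B0, ⟨hB0, hB0E, hB0t⟩, subset_rfl⟩
      obtain ⟨B, hBT0, hmax⟩ := Set.Finite.exists_maximalFor id _ hT0fin hT0ne
      exact ⟨B, hBT0.1, hBT0.2 hxB0,
        fun B' hB' hBB' => subset_antisymm hBB' (hmax ⟨hB', hBT0.2.trans hBB'⟩ hBB')⟩
    set Tm := {B | B ∈ T ∧ ∀ B' ∈ T, B ⊆ B' → B = B'} with hTm
    have hTmfin : Tm.Finite := hTfin.subset fun B hB => hB.1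
    have hdisj : ∀ B ∈ hTmfin.toFinset, ∀ B' ∈ hTmfin.toFinset, B ≠ B' → Disjoint B B' := by
      intro B hB B' hB' hne
      rw [Set.Finite.mem_toFinset] at hB hB'
      by_contra hd
      rw [Set.not_disjoint_iff] at hd
      obtain ⟨x, hx, hx'⟩ := hd
      rcases h𝒜 B hB.1.1 B' hB'.1.1 ⟨x, hx, hx'⟩ with h | h
      · exact hne (hB.2 B' hB'.1 h)
      · exact hne (hB'.2 B hB.1 h).symm
    have hcov : I \ ⋃₀ ↑hTmfin.toFinset ⊆ S := by
      rintro x ⟨hxI, hxn⟩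
      by_contra hxS
      obtain ⟨B, hBT, hxB, hBmax⟩ := hmaxmem x hxI hxS
      exact hxn ⟨B, by rw [Set.Finite.coe_toFinset]; exact ⟨hBT, hBmax⟩, hxB⟩
    have hle : ∀ B ∈ hTmfin.toFinset, (I ∩ B).ncard ≤ (S ∩ B).ncard := by
      intro B hB
      rw [Set.Finite.mem_toFinset] at hB
      calc (I ∩ B).ncard ≤ c B := hIf B hB.1.1 hB.1.2.1
        _ = (S ∩ B).ncard := hB.1.2.2.symm
    have := count_le hTmfin.toFinset S I hSfin hIfin hdisj hle hcov
    omega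
  -- (ii) → (i)
  have hii_i : E ∈ 𝒜 → M.IsConnected' := by
    intro hEA e he f hf hef
    rw [hME] at he hf
    by_cases hind : M.Indep {e, f}
    · -- grow {e,f} to a circuit
      have h2 : 2 ≤ c E := by
        have h1 := ((hInd _).mp hind).2 E hEA
        rw [inter_eq_self_of_subset_left
          (insert_subset he (singleton_subset_iff.mpr hf)), ncard_pair hef] at h1
        exact h1
      obtain ⟨I0, hI0E, hI0f, hI0c⟩ := hcanon E hEA
      rw [inter_eq_self_of_subset_left hI0E] at hI0c
      have hI0fin : I0.Finite := hE.subset hI0E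
      obtain ⟨J, hJI0, hJcard⟩ :=
        Set.exists_subset_card_eq (show c E ≤ I0.ncard by omega)
      have hJfin : J.Finite := hI0fin.subset hJI0
      have hJind : M.Indep J := by
        rw [hInd]
        refine ⟨hJI0.trans hI0E, fun B hB => ?_⟩
        by_cases hBE : B = E
        · subst hBE
          rw [inter_eq_self_of_subset_left (hJI0.trans hI0E)]
          omega
        · exact (ncard_le_ncard (inter_subset_inter_left _ hJI0)
            (hI0fin.inter_of_left _)).trans (hI0f B hB hBE)
      have hIfin : ∀ {X : Set α}, M.Indep X → X.Finite := by
        intro X hX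
        exact hE.subset ((hInd X).mp hX).1
      have grow : ∀ n : ℕ, ∀ S, M.Indep S → e ∈ S → f ∈ S → S.ncard + n = c E →
          ∃ S', M.Indep S' ∧ e ∈ S' ∧ f ∈ S' ∧ S'.ncard = c E := by
        intro n
        induction n with
        | zero => intro S h he' hf' hc; exact ⟨S, h, he', hf', by omega⟩
        | succ n ih =>
          intro S h he' hf' hc
          have hlt : S.encard < J.encard := by
            rw [← (hIfin h).cast_ncard_eq, ← hJfin.cast_ncard_eq]
            exact_mod_cast (by omega : S.ncard < J.ncard)
          obtain ⟨g, hg, hgind⟩ := h.augment hJind hlt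
          exact ih (insert g S) hgind (mem_insert_of_mem _ he') (mem_insert_of_mem _ hf')
            (by rw [ncard_insert_of_notMem hg.2 (hIfin h)]; omega)
      obtain ⟨S, hSind, heS, hfS, hScard⟩ := grow (c E - 2) {e, f} hind
        (mem_insert _ _) (mem_insert_of_mem _ rfl) (by rw [ncard_pair hef]; omega)
      obtain ⟨I1, hI1sub, hI1card⟩ :=
        Set.exists_subset_card_eq (show c E + 1 ≤ I0.ncard by omega)
      have hSE' : S ⊆ E := ((hInd S).mp hSind).1
      have hSfeas : ∀ B ∈ 𝒜, B ≠ E → (S ∩ B).ncard ≤ c B :=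
        fun B hB _ => ((hInd S).mp hSind).2 B hB
      have hI1E : I1 ⊆ E := hI1sub.trans hI0E
      have hI1feas : ∀ B ∈ 𝒜, B ≠ E → (I1 ∩ B).ncard ≤ c B := fun B hB hBE =>
        (ncard_le_ncard (inter_subset_inter_left _ hI1sub)
          (hI0fin.inter_of_left _)).trans (hI0f B hB hBE)
      obtain ⟨x, hxI1, hxS, hxsub, hxfeas⟩ :=
        aug S I1 hSE' hSfeas hI1E hI1feas (by omega)
      have hcirc := mk_circuit hEA (insert x S) hxsub hxfeas
        (by rw [ncard_insert_of_notMem hxS (hIfin hSind)]; omega)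
      exact ⟨insert x S, hcirc, mem_insert_of_mem _ heS, mem_insert_of_mem _ hfS⟩
    · -- {e,f} itself is a circuit
      refine ⟨{e, f}, ⟨?_, ?_⟩, mem_insert _ _, mem_insert_of_mem _ rfl⟩
      · rw [Matroid.dep_iff]
        exact ⟨hind, by rw [hME]; exact insert_subset he (singleton_subset_iff.mpr hf)⟩
      · intro D hD
        have hmiss : e ∉ D ∨ f ∉ D := by
          by_contra hcon
          push_neg at hcon
          have : ({e, f} : Set α) ⊆ D := insert_subset hcon.1 (singleton_subset_iff.mpr hcon.2)
          exact hD.2 this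
        rcases hmiss with h | h
        · have hDf : D ⊆ {f} := by
            intro z hz
            rcases hD.subset hz with rfl | hzf
            · exact absurd hz h
            · exact hzf
          exact (hloop f (hME ▸ hf)).subset hDf
        · have hDe : D ⊆ {e} := by
            intro z hz
            rcases hD.subset hz with rfl | hzf
            · rfl
            · exact absurd (hzf ▸ hz) h
          exact (hloop e (hME ▸ he)).subset hDe
  exact ⟨⟨hi_ii, hii_i⟩, ⟨hii_iii, hiii_ii⟩⟩
end

section
/- Let M be a loopless laminar matroid with canonical presentation (E, 𝒜, c). Then every member of 𝒜 is a connected flat of M, and conversely every connected flat F of M with |F| ≥ 2 belongs to 𝒜. -/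
open Set Matroid

variable {α : Type*}

lemma core_count (c : Set α → ℕ) :
    ∀ (n : ℕ) (ℬ : Set (Set α)), ℬ.Finite → ℬ.ncard ≤ n → IsLaminarFamily ℬ →
    ∀ I J : Set α, I.Finite → J.Finite →
    (∀ B ∈ ℬ, (I ∩ B).ncard ≤ c B) →
    (∀ B ∈ ℬ, (J ∩ B).ncard ≤ c B) →
    (∀ x ∈ J \ I, ∃ B ∈ ℬ, x ∈ B ∧ c B ≤ (I ∩ B).ncard) →
    J.ncard ≤ I.ncard := by
  intro n
  induction n with
  | zero =>
    intro ℬ hfin hcard hlam I J hIf hJf hIfe hJfe htight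
    have hempty : ℬ = ∅ := by
      rw [← Set.ncard_eq_zero hfin]; omega
    have hJI : J ⊆ I := by
      intro x hx
      by_contra hxI
      obtain ⟨B, hB, -⟩ := htight x ⟨hx, hxI⟩
      simp [hempty] at hB
    exact Set.ncard_le_ncard hJI hIf
  | succ n ih =>
    intro ℬ hfin hcard hlam I J hIf hJf hIfe hJfe htight
    by_cases hJI : J ⊆ I
    · exact Set.ncard_le_ncard hJI hIf
    obtain ⟨x₀, hx₀⟩ : (J \ I).Nonempty := by
      rw [Set.diff_nonempty]; exact hJI
    obtain ⟨B₀, hB₀ℬ, hx₀B₀, hB₀t⟩ := htight x₀ hx₀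
    set S := {B | B ∈ ℬ ∧ B.Nonempty ∧ c B ≤ (I ∩ B).ncard} with hS
    have hSsub : S ⊆ ℬ := fun B hB => hB.1
    have hSfin : S.Finite := hfin.subset hSsub
    have hSne : S.Nonempty := ⟨B₀, hB₀ℬ, ⟨x₀, hx₀B₀⟩, hB₀t⟩
    obtain ⟨T, hTS, hTmax0⟩ := hSfin.exists_maximalFor id S hSne
    have hTmax : ∀ B ∈ S, T ⊆ B → T = B := fun B hB h => le_antisymm h (hTmax0 hB h)
    have hTne : T.Nonempty := hTS.2.1
    set ℬ' := {B | B ∈ ℬ ∧ B ∩ T = ∅} with hℬ'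
    have hℬ'sub : ℬ' ⊆ ℬ := fun B hB => hB.1
    have hTnot : T ∉ ℬ' := fun h => hTne.ne_empty (by simpa using h.2)
    have hss : ℬ' ⊂ ℬ := ⟨hℬ'sub, fun h => hTnot (h hTS.1)⟩
    have hcard' : ℬ'.ncard ≤ n := by
      have := Set.ncard_lt_ncard hss hfin
      omega
    have hlam' : IsLaminarFamily ℬ' := fun A hA B hB h => hlam A hA.1 B hB.1 h
    have hIH : (J \ T).ncard ≤ (I \ T).ncard := by
      refine ih ℬ' (hfin.subset hℬ'sub) hcard' hlam' (I \ T) (J \ T) (hIf.diff (t := T))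
        (hJf.diff (t := T)) ?_ ?_ ?_
      · intro B hB
        exact le_trans (Set.ncard_le_ncard
          (Set.inter_subset_inter_left B Set.diff_subset) (hIf.inter_of_left B))
          (hIfe B hB.1)
      · intro B hB
        exact le_trans (Set.ncard_le_ncard
          (Set.inter_subset_inter_left B Set.diff_subset) (hJf.inter_of_left B))
          (hJfe B hB.1)
      · rintro x ⟨⟨hxJ, hxT⟩, hxIT⟩
        have hxI : x ∉ I := fun h => hxIT ⟨h, hxT⟩
        obtain ⟨B, hBℬ, hxB, hBt⟩ := htight x ⟨hxJ, hxI⟩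
        have hBT : B ∩ T = ∅ := by
          by_contra hne
          rw [← Ne, ← Set.nonempty_iff_ne_empty] at hne
          rcases hlam B hBℬ T hTS.1 hne with hsub | hsub
          · exact hxT (hsub hxB)
          · have heq : T = B := hTmax B ⟨hBℬ, ⟨x, hxB⟩, hBt⟩ hsub
            exact hxT (heq ▸ hxB)
        have heq : (I \ T) ∩ B = I ∩ B := by
          apply Set.Subset.antisymm
          · exact Set.inter_subset_inter_left B Set.diff_subset
          · rintro y ⟨hyI, hyB⟩
            refine ⟨⟨hyI, fun hyT => ?_⟩, hyB⟩
            have : y ∈ B ∩ T := ⟨hyB, hyT⟩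
            rw [hBT] at this
            exact this
        exact ⟨B, ⟨hBℬ, hBT⟩, hxB, by rw [heq]; exact hBt⟩
    calc J.ncard = (J ∩ T).ncard + (J \ T).ncard :=
          (Set.ncard_inter_add_ncard_diff_eq_ncard J T hJf).symm
      _ ≤ c T + (I \ T).ncard := add_le_add (hJfe T hTS.1) hIH
      _ ≤ (I ∩ T).ncard + (I \ T).ncard := add_le_add_left hTS.2.2 _
      _ = I.ncard := Set.ncard_inter_add_ncard_diff_eq_ncard I T hIf

lemma augment_lam (c : Set α → ℕ) (ℬ : Set (Set α)) (hfin : ℬ.Finite)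
    (hlam : IsLaminarFamily ℬ) (I J : Set α) (hIf : I.Finite) (hJf : J.Finite)
    (hIfe : ∀ B ∈ ℬ, (I ∩ B).ncard ≤ c B) (hJfe : ∀ B ∈ ℬ, (J ∩ B).ncard ≤ c B)
    (hlt : I.ncard < J.ncard) :
    ∃ x ∈ J \ I, ∀ B ∈ ℬ, ((insert x I) ∩ B).ncard ≤ c B := by
  by_contra h
  push_neg at h
  have htight : ∀ x ∈ J \ I, ∃ B ∈ ℬ, x ∈ B ∧ c B ≤ (I ∩ B).ncard := by
    intro x hx
    obtain ⟨B, hB, hlt'⟩ := h x hx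
    have hxB : x ∈ B := by
      by_contra hxB
      rw [Set.insert_inter_of_notMem hxB] at hlt'
      exact absurd (hIfe B hB) (not_le.2 hlt')
    rw [Set.insert_inter_of_mem hxB] at hlt'
    have := Set.ncard_insert_le x (I ∩ B)
    exact ⟨B, hB, hxB, by omega⟩
  have := core_count c ℬ.ncard ℬ hfin le_rfl hlam I J hIf hJf hIfe hJfe htight
  omega

lemma grow_lam (c : Set α → ℕ) (ℬ : Set (Set α)) (hfin : ℬ.Finite)
    (hlam : IsLaminarFamily ℬ) (J : Set α) (hJf : J.Finite)
    (hJfe : ∀ B ∈ ℬ, (J ∩ B).ncard ≤ c B) :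
    ∀ (k : ℕ) (I : Set α), I.Finite → (∀ B ∈ ℬ, (I ∩ B).ncard ≤ c B) →
      I.ncard + k ≤ J.ncard →
      ∃ C, I ⊆ C ∧ C ⊆ I ∪ J ∧ C.Finite ∧ C.ncard = I.ncard + k ∧
        ∀ B ∈ ℬ, (C ∩ B).ncard ≤ c B := by
  intro k
  induction k with
  | zero =>
    intro I hIf hIfe _
    exact ⟨I, Set.Subset.rfl, Set.subset_union_left, hIf, by omega, hIfe⟩
  | succ k ih =>
    intro I hIf hIfe hle
    have hlt : I.ncard < J.ncard := by omega
    obtain ⟨x, hxJI, hfe'⟩ := augment_lam c ℬ hfin hlam I J hIf hJf hIfe hJfe hlt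
    have hxI : x ∉ I := hxJI.2
    have hcard : (insert x I).ncard = I.ncard + 1 := Set.ncard_insert_of_notMem hxI hIf
    obtain ⟨C, hIC, hCsub, hCf, hCcard, hCfe⟩ := ih (insert x I) (hIf.insert x) hfe'
      (by omega)
    refine ⟨C, (Set.subset_insert x I).trans hIC, hCsub.trans ?_, hCf, by omega, hCfe⟩
    exact Set.union_subset (Set.insert_subset (Set.mem_union_right _ hxJI.1)
      Set.subset_union_left) Set.subset_union_right

theorem stmt_18 (E : Set α) (hE : E.Finite)
    (𝒜 : Set (Set α)) (h𝒜E : ∀ A ∈ 𝒜, A ⊆ E) (h𝒜 : IsLaminarFamily 𝒜)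
    (c : Set α → ℕ) (M : Matroid α) (hM : M.IsLaminarPresBy E 𝒜 c)
    (hcanon : IsCanonical E 𝒜 c) (hloop : M.Loopless') :
    (∀ A ∈ 𝒜, M.IsFlat A ∧ (M ↾ A).IsConnected') ∧
      (∀ F, M.IsFlat F → (M ↾ F).IsConnected' → 2 ≤ F.ncard → F ∈ 𝒜) := by

  obtain ⟨hME, hInd⟩ := hM
  have h𝒜fin : 𝒜.Finite := hE.finite_subsets.subset (fun A hA => h𝒜E A hA)
  -- capacities of nonempty members are positive
  have hc1 : ∀ B ∈ 𝒜, ∀ x ∈ B, 1 ≤ c B := by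
    intro B hB x hxB
    have hxE : x ∈ E := h𝒜E B hB hxB
    have hind := (hInd {x}).1 (hloop x (by rw [hME]; exact hxE))
    have h2 := hind.2 B hB
    rwa [Set.inter_eq_self_of_subset_left (Set.singleton_subset_iff.2 hxB),
      Set.ncard_singleton] at h2
  -- capacities strictly increase along the laminar order
  have hmono : ∀ A ∈ 𝒜, ∀ B ∈ 𝒜, A ⊆ B → A ≠ B → c A < c B := by
    intro A hA B hB hsub hne
    obtain ⟨I, hIE, hIfe, hIA⟩ := hcanon A hA
    have hIfin : I.Finite := hE.subset hIE
    have h1 : (I ∩ A).ncard ≤ (I ∩ B).ncard :=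
      Set.ncard_le_ncard (Set.inter_subset_inter_right I hsub) (hIfin.inter_of_left B)
    have h2 := hIfe B hB (Ne.symm hne)
    omega
  -- each essential set contains a "circuit-like" set of size c A + 1
  have hessJ : ∀ A ∈ 𝒜, ∃ J, J ⊆ A ∧ J.Finite ∧ J.ncard = c A + 1 ∧
      ∀ B ∈ 𝒜, B ≠ A → (J ∩ B).ncard ≤ c B := by
    intro A hA
    obtain ⟨I, hIE, hIfe, hIA⟩ := hcanon A hA
    have hIfin : I.Finite := hE.subset hIE
    obtain ⟨J, hJsub, hJcard⟩ := Set.exists_subset_card_eq (show c A + 1 ≤ (I ∩ A).ncard by omega)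
    have hJI : J ⊆ I := hJsub.trans Set.inter_subset_left
    refine ⟨J, hJsub.trans Set.inter_subset_right, hIfin.subset hJI, hJcard, ?_⟩
    intro B hB hne
    exact le_trans (Set.ncard_le_ncard (Set.inter_subset_inter_left B hJI)
      (hIfin.inter_of_left B)) (hIfe B hB hne)
  -- inserting an external point into a feasible c A-set stays independent
  have hinsert : ∀ A ∈ 𝒜, ∀ K, K ⊆ A → K.Finite → K.ncard = c A →
      (∀ B ∈ 𝒜, (K ∩ B).ncard ≤ c B) → ∀ g ∈ E, g ∉ A → M.Indep (insert g K) := by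
    intro A hA K hKA hKf hKcard hKfe g hgE hgA
    rw [hInd]
    refine ⟨Set.insert_subset hgE (hKA.trans (h𝒜E A hA)), ?_⟩
    intro B hB
    by_cases hgB : g ∈ B
    · have hBA : B ≠ A := fun h => hgA (h ▸ hgB)
      by_cases hint : (A ∩ B).Nonempty
      · rcases h𝒜 A hA B hB hint with hsub | hsub
        · have hlt := hmono A hA B hB hsub (Ne.symm hBA)
          have h1 : (insert g K ∩ B).ncard ≤ (K ∩ B).ncard + 1 := by
            rw [Set.insert_inter_of_mem hgB]
            exact Set.ncard_insert_le g (K ∩ B)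
          have h2 : (K ∩ B).ncard ≤ K.ncard :=
            Set.ncard_le_ncard Set.inter_subset_left hKf
          omega
        · exact absurd (hsub hgB) hgA
      · have hKB : K ∩ B = ∅ := by
          rw [Set.not_nonempty_iff_eq_empty] at hint
          apply Set.eq_empty_of_subset_empty
          rw [← hint]
          exact Set.inter_subset_inter_left B hKA
        rw [Set.insert_inter_of_mem hgB, hKB]
        simpa using hc1 B hB g hgB
    · rw [Set.insert_inter_of_notMem hgB]
      exact hKfe B hB
  constructor
  · -- Part 1: each A ∈ 𝒜 is a connected flat
    intro A hA
    have hAE : A ⊆ E := h𝒜E A hA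
    constructor
    · -- A is a flat
      obtain ⟨J, hJA, hJf, hJcard, hJfe⟩ := hessJ A hA
      have hJE : J ⊆ E := hJA.trans hAE
      have hJne : J.Nonempty := by
        rw [← Set.ncard_pos hJf]; omega
      obtain ⟨x, hxJ⟩ := hJne
      set K := J \ {x} with hK
      have hKf : K.Finite := hJf.diff
      have hKA : K ⊆ A := Set.diff_subset.trans hJA
      have hKcard : K.ncard = c A := by
        have h1 : (J \ {x}).ncard + 1 = J.ncard := Set.ncard_diff_singleton_add_one hxJ hJf
        rw [hK]
        omega
      have hKfe : ∀ B ∈ 𝒜, (K ∩ B).ncard ≤ c B := by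
        intro B hB
        by_cases hBA : B = A
        · subst hBA
          rw [Set.inter_eq_self_of_subset_left hKA]
          omega
        · exact le_trans (Set.ncard_le_ncard
            (Set.inter_subset_inter_left B Set.diff_subset) (hJf.inter_of_left B))
            (hJfe B hB hBA)
      have hKind : M.Indep K := (hInd K).2 ⟨Set.diff_subset.trans hJE, hKfe⟩
      have hKbasis : M.IsBasis K A := by
        refine hKind.isBasis_of_forall_insert hKA (fun e he => ?_)
        rw [dep_iff]
        have hins : insert e K ⊆ A := Set.insert_subset he.1 hKA
        constructor
        · intro hind
          have h2 := ((hInd _).1 hind).2 A hA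
          rw [Set.inter_eq_self_of_subset_left hins,
            Set.ncard_insert_of_notMem he.2 hKf] at h2
          omega
        · rw [hME]; exact hins.trans hAE
      have hclosureA : M.closure A ⊆ A := by
        intro g hg
        by_contra hgA
        have hgE : g ∈ E := by rw [← hME]; exact M.closure_subset_ground A hg
        have hgK : g ∈ M.closure K := by rw [hKbasis.closure_eq_closure]; exact hg
        rcases (hKind.mem_closure_iff).1 hgK with hdep | hgKmem
        · exact hdep.not_indep (hinsert A hA K hKA hKf hKcard hKfe g hgE hgA)
        · exact hgA (hKA hgKmem)
      constructor
      · intro I X hIA hIX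
        have h1 := hIX.subset_closure
        rw [hIA.closure_eq_closure] at h1
        exact h1.trans hclosureA
      · rw [hME]; exact hAE
    · -- M ↾ A is connected
      intro e he f hf hef
      rw [restrict_ground_eq] at he hf
      set 𝒞 := {B | B ∈ 𝒜 ∧ e ∈ B ∧ f ∈ B} with h𝒞
      have hA𝒞 : A ∈ 𝒞 := ⟨hA, he, hf⟩
      obtain ⟨A', hA'𝒞, hA'min0⟩ := Set.Finite.exists_minimalFor id 𝒞
        (h𝒜fin.subset (fun B hB => hB.1)) ⟨A, hA𝒞⟩
      have hA'min : ∀ B ∈ 𝒞, B ⊆ A' → A' = B := fun B hB h => le_antisymm (hA'min0 hB h) h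
      obtain ⟨hA'𝒜, heA', hfA'⟩ := hA'𝒞
      have hA'E : A' ⊆ E := h𝒜E A' hA'𝒜
      have hcA' : 1 ≤ c A' := hc1 A' hA'𝒜 e heA'
      have hA'A : A' ⊆ A := by
        rcases h𝒜 A' hA'𝒜 A hA ⟨e, heA', he⟩ with h | h
        · exact h
        · exact le_of_eq (hA'min A hA𝒞 h : A' = A)
      -- the pair {e, f} is feasible away from A'
      have hpairfe : ∀ B ∈ 𝒜, B ≠ A' → (({e, f} : Set α) ∩ B).ncard ≤ c B := by
        intro B hB hne
        by_cases heB : e ∈ B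
        · by_cases hfB : f ∈ B
          · rcases h𝒜 B hB A' hA'𝒜 ⟨e, heB, heA'⟩ with hsub | hsub
            · exact absurd (hA'min B ⟨hB, heB, hfB⟩ hsub : A' = B).symm hne
            · have hlt := hmono A' hA'𝒜 B hB hsub (Ne.symm hne)
              have h1 : (({e, f} : Set α) ∩ B).ncard ≤ 2 := by
                refine le_trans (Set.ncard_le_ncard Set.inter_subset_left
                  (Set.toFinite _)) ?_
                exact le_of_eq (Set.ncard_pair hef)
              omega
          · have hsub : ({e, f} : Set α) ∩ B ⊆ {e} := by
              rintro y ⟨hy, hyB⟩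
              rcases hy with rfl | rfl
              · exact rfl
              · exact absurd hyB hfB
            refine le_trans (le_trans (Set.ncard_le_ncard hsub (Set.toFinite _)) ?_)
              (hc1 B hB e heB)
            simp
        · have hsub : ({e, f} : Set α) ∩ B ⊆ {f} := by
            rintro y ⟨hy, hyB⟩
            rcases hy with rfl | rfl
            · exact absurd hyB heB
            · exact rfl
          by_cases hfB : f ∈ B
          · refine le_trans (le_trans (Set.ncard_le_ncard hsub (Set.toFinite _)) ?_)
              (hc1 B hB f hfB)
            simp
          · have : ({e, f} : Set α) ∩ B = ∅ := by
              apply Set.eq_empty_of_subset_empty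
              rintro y ⟨hy, hyB⟩
              rcases hy with rfl | rfl
              · exact heB hyB
              · exact hfB hyB
            simp [this]
      obtain ⟨J₀, hJ₀A', hJ₀f, hJ₀card, hJ₀fe⟩ := hessJ A' hA'𝒜
      -- grow {e,f} to a feasible set of size c A' + 1 inside A'
      have hℬlam : IsLaminarFamily {B | B ∈ 𝒜 ∧ B ≠ A'} :=
        fun X hX Y hY h => h𝒜 X hX.1 Y hY.1 h
      have hpaircard : ({e, f} : Set α).ncard = 2 := Set.ncard_pair hef
      obtain ⟨C, hIC, hCsub, hCf, hCcard, hCfe⟩ := grow_lam c {B | B ∈ 𝒜 ∧ B ≠ A'}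
        (h𝒜fin.subset (fun B hB => hB.1)) hℬlam J₀ hJ₀f
        (fun B hB => hJ₀fe B hB.1 hB.2) (c A' - 1) {e, f} (Set.toFinite _)
        (fun B hB => hpairfe B hB.1 hB.2) (by omega)
      have hCA' : C ⊆ A' := by
        refine hCsub.trans (Set.union_subset ?_ hJ₀A')
        exact Set.insert_subset heA' (Set.singleton_subset_iff.2 hfA')
      have hCcard' : C.ncard = c A' + 1 := by omega
      have hCfe' : ∀ B ∈ 𝒜, B ≠ A' → (C ∩ B).ncard ≤ c B :=
        fun B hB hne => hCfe B ⟨hB, hne⟩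
      refine ⟨C, ⟨?_, ?_⟩, hIC (Set.mem_insert e {f}),
        hIC (Set.mem_insert_of_mem e rfl)⟩
      · -- C is dependent in M ↾ A
        rw [restrict_dep_iff]
        refine ⟨fun hind => ?_, hCA'.trans hA'A⟩
        have h2 := ((hInd C).1 hind).2 A' hA'𝒜
        rw [Set.inter_eq_self_of_subset_left hCA'] at h2
        omega
      · -- proper subsets of C are independent in M ↾ A
        intro D hD
        rw [restrict_indep_iff]
        have hDC : D ⊆ C := hD.1
        have hDlt : D.ncard < C.ncard := Set.ncard_lt_ncard hD hCf
        refine ⟨(hInd D).2 ⟨hDC.trans (hCA'.trans hA'E), ?_⟩, hDC.trans (hCA'.trans hA'A)⟩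
        intro B hB
        by_cases hBA : B = A'
        · subst hBA
          refine le_trans (Set.ncard_le_ncard Set.inter_subset_left (hCf.subset hDC)) ?_
          omega
        · exact le_trans (Set.ncard_le_ncard (Set.inter_subset_inter_left B hDC)
            (hCf.inter_of_left B)) (hCfe' B hB hBA)
  · -- Part 2: connected flats of size ≥ 2 belong to 𝒜
    intro F hflat hconn hF2
    have hFE : F ⊆ E := by rw [← hME]; exact hflat.subset_ground
    have hFfin : F.Finite := hE.subset hFE
    -- the closure of any circuit is a member of 𝒜 containing it
    have hcirc : ∀ C, M.IsCircuit' C → ∃ A ∈ 𝒜, C ⊆ A ∧ M.closure C = A := by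
      rintro C ⟨hCdep, hCmin⟩
      have hCE : C ⊆ E := by rw [← hME]; exact hCdep.subset_ground
      have hCf : C.Finite := hE.subset hCE
      obtain ⟨A, hA, hAv⟩ : ∃ A ∈ 𝒜, c A < (C ∩ A).ncard := by
        by_contra h
        push_neg at h
        exact hCdep.not_indep ((hInd C).2 ⟨hCE, h⟩)
      have hAE : A ⊆ E := h𝒜E A hA
      have hCA : C ⊆ A := by
        by_contra hns
        have hss : C ∩ A ⊂ C :=
          ⟨Set.inter_subset_left, fun h => hns (fun y hy => (h hy).2)⟩
        have h2 := ((hInd _).1 (hCmin _ hss)).2 A hA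
        rw [Set.inter_eq_self_of_subset_left
          (Set.inter_subset_right : C ∩ A ⊆ A)] at h2
        omega
      rw [Set.inter_eq_self_of_subset_left hCA] at hAv
      obtain ⟨x, hxC⟩ : C.Nonempty := by
        rw [← Set.ncard_pos hCf]; omega
      set K := C \ {x} with hKdef
      have hKss : K ⊂ C := Set.sdiff_singleton_ssubset.2 hxC
      have hKind : M.Indep K := hCmin K hKss
      have hKfe := ((hInd K).1 hKind).2
      have hKC : K ⊆ C := Set.diff_subset
      have hKf : K.Finite := hCf.diff
      have hKA : K ⊆ A := hKC.trans hCA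
      have hKcard1 : K.ncard + 1 = C.ncard := by
        rw [hKdef]
        exact Set.ncard_diff_singleton_add_one hxC hCf
      have hKle : K.ncard ≤ c A := by
        have h2 := hKfe A hA
        rwa [Set.inter_eq_self_of_subset_left hKA] at h2
      have hCcard : C.ncard = c A + 1 := by omega
      have hKcard : K.ncard = c A := by omega
      have hKbasis : M.IsBasis K C := by
        refine hKind.isBasis_of_forall_insert hKC (fun y hy => ?_)
        have hyx : y = x := by
          rcases hy with ⟨hyC, hyK⟩
          by_contra hne
          exact hyK ⟨hyC, hne⟩
        subst hyx
        have : insert y K = C := by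
          rw [hKdef, Set.insert_diff_singleton, Set.insert_eq_of_mem hxC]
        rw [this]
        exact hCdep
      refine ⟨A, hA, hCA, Set.Subset.antisymm ?_ ?_⟩
      · intro g hg
        by_contra hgA
        have hgE : g ∈ E := by rw [← hME]; exact M.closure_subset_ground C hg
        rw [← hKbasis.closure_eq_closure] at hg
        rcases (hKind.mem_closure_iff).1 hg with hdep | hgK
        · exact hdep.not_indep (hinsert A hA K hKA hKf hKcard hKfe g hgE hgA)
        · exact hgA (hKA hgK)
      · intro g hgA
        rw [← hKbasis.closure_eq_closure]
        by_cases hgK : g ∈ K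
        · exact M.subset_closure K (by rw [hME]; exact hKA.trans hAE) hgK
        · refine (hKind.mem_closure_iff).2 (Or.inl ?_)
          rw [dep_iff]
          constructor
          · intro hind
            have h2 := ((hInd _).1 hind).2 A hA
            rw [Set.inter_eq_self_of_subset_left
              (Set.insert_subset hgA hKA), Set.ncard_insert_of_notMem hgK hKf] at h2
            omega
          · rw [hME]
            exact Set.insert_subset (hAE hgA) (hKA.trans hAE)
    -- from any two distinct points of F, get a member of 𝒜 inside F containing them
    have hgetA : ∀ g₁ ∈ F, ∀ g₂ ∈ F, g₁ ≠ g₂ →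
        ∃ A ∈ 𝒜, g₁ ∈ A ∧ g₂ ∈ A ∧ A ⊆ F := by
      intro g₁ h₁ g₂ h₂ hne
      obtain ⟨C, hCcirc, h1C, h2C⟩ := hconn g₁ (by rw [restrict_ground_eq]; exact h₁)
        g₂ (by rw [restrict_ground_eq]; exact h₂) hne
      have hCF : C ⊆ F := by
        have := hCcirc.1.subset_ground
        rwa [restrict_ground_eq] at this
      have hMcirc : M.IsCircuit' C := by
        constructor
        · rw [dep_iff]
          refine ⟨fun h => ?_, hCF.trans hflat.subset_ground⟩
          exact (restrict_dep_iff.1 hCcirc.1).1 h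
        · intro D hD
          exact (restrict_indep_iff.1 (hCcirc.2 D hD)).1
      obtain ⟨A, hA, hCA, hclA⟩ := hcirc C hMcirc
      refine ⟨A, hA, hCA h1C, hCA h2C, ?_⟩
      rw [← hclA]
      calc M.closure C ⊆ M.closure F := M.closure_subset_closure hCF
        _ = F := hflat.closure
    obtain ⟨P, hPF, hPcard⟩ := Set.exists_subset_card_eq hF2
    obtain ⟨e, f, hef, hP⟩ := Set.ncard_eq_two.1 hPcard
    have he : e ∈ F := hPF (hP ▸ Set.mem_insert e {f})
    have hf : f ∈ F := hPF (hP ▸ Set.mem_insert_of_mem e rfl)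
    obtain ⟨A₀, hA₀, heA₀, -, hA₀F⟩ := hgetA e he f hf hef
    set S := {A | A ∈ 𝒜 ∧ e ∈ A ∧ A ⊆ F} with hSdef
    obtain ⟨Am, hAmS, hAmmax0⟩ := Set.Finite.exists_maximalFor id S
      (h𝒜fin.subset (fun A h => h.1)) ⟨A₀, hA₀, heA₀, hA₀F⟩
    have hAmmax : ∀ B ∈ S, Am ⊆ B → Am = B := fun B hB h => le_antisymm h (hAmmax0 hB h)
    by_contra hFnot
    have hssub : Am ≠ F := fun h => hFnot (h ▸ hAmS.1)
    obtain ⟨g, hgF, hgAm⟩ := Set.exists_of_ssubset (hAmS.2.2.ssubset_of_ne hssub)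
    have hge : e ≠ g := fun h => hgAm (h ▸ hAmS.2.1)
    obtain ⟨A', hA', heA'2, hgA', hA'F⟩ := hgetA e he g hgF hge
    rcases h𝒜 A' hA' Am hAmS.1 ⟨e, heA'2, hAmS.2.1⟩ with h | h
    · exact hgAm (h hgA')
    · have heq : Am = A' := hAmmax A' ⟨hA', heA'2, hA'F⟩ h
      exact hgAm (heq.symm ▸ hgA')
end

section
/- Every parallel extension of a laminar matroid is laminar. That is, if M is laminar, e is an element of M, and M' is obtained from M by adding a new element f in parallel with e, then M' is laminar. -/
open Set

variable {α : Type*}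

set_option maxHeartbeats 1000000 in
theorem stmt_19 (M : Matroid α) (hfin : M.E.Finite) (hM : M.IsLaminar)
    (e : α) (he : M.Indep {e}) (f : α) (hf : f ∉ M.E)
    (M' : Matroid α) (hE : M'.E = insert f M.E)
    (hI : ∀ I, M'.Indep I ↔
      (f ∉ I ∧ M.Indep I) ∨ (f ∈ I ∧ e ∉ I ∧ M.Indep (insert e (I \ {f})))) :
    M'.IsLaminar := by
  have heE : e ∈ M.E := he.subset_ground rfl
  have hef : e ≠ f := fun h => hf (h ▸ heE)
  -- transfer of independence for `f`-free sets
  have hIff : ∀ X : Set α, f ∉ X → (M'.Indep X ↔ M.Indep X) := by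
    intro X hfX; rw [hI]; simp [hfX]
  -- independence of `insert f J` for `f`-free `J`
  have hIfins : ∀ J : Set α, f ∉ J →
      (M'.Indep (insert f J) ↔ e ∉ J ∧ M.Indep (insert e J)) := by
    intro J hfJ
    rw [hI]
    simp [hfJ, insert_diff_self_of_notMem hfJ, hef, Ne.symm hef]
  -- `{e, f}` is dependent in `M'`
  have hefdep : M'.Dep {e, f} := by
    rw [Matroid.dep_iff]
    constructor
    · rw [hI]; simp [hef]
    · rw [hE]
      exact insert_subset (Or.inr heE) (singleton_subset_iff.mpr (Or.inl rfl))
  -- key closure computation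
  have key : ∀ X ⊆ M.E, ∀ x, x ∈ M'.closure X ↔
      (x ∈ M.closure X ∨ (x = f ∧ e ∈ M.closure X)) := by
    intro X hX x
    obtain ⟨I, hIb⟩ := M.exists_isBasis X hX
    have hfI : f ∉ I := fun h => hf (hIb.indep.subset_ground h)
    have hI' : M'.Indep I := (hIff I hfI).mpr hIb.indep
    have hIE' : I ⊆ M'.E := hI'.subset_ground
    -- closure transfer on the independent set `I`, for `y ≠ f`
    have hkey : ∀ y, y ≠ f → (y ∈ M'.closure I ↔ y ∈ M.closure I) := by
      intro y hyf
      rw [hI'.mem_closure_iff, hIb.indep.mem_closure_iff, Matroid.dep_iff, Matroid.dep_iff,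
        (hIff (insert y I) (by simp [Ne.symm hyf, hfI])), insert_subset_iff, insert_subset_iff, hE]
      have h1 : I ⊆ M.E := hIb.indep.subset_ground
      have h2 : I ⊆ insert f M.E := h1.trans (subset_insert _ _)
      have h3 : y ∈ insert f M.E ↔ y ∈ M.E := by simp [hyf]
      tauto
    -- membership of `f` in the closure of `I`
    have hkeyf : f ∈ M'.closure I ↔ e ∈ M.closure I := by
      rw [hI'.mem_closure_iff_of_notMem hfI, hIb.indep.mem_closure_iff, Matroid.dep_iff,
        Matroid.dep_iff, hIfins I hfI, insert_subset_iff, insert_subset_iff, hE]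
      have h1 : I ⊆ M.E := hIb.indep.subset_ground
      have h2 : I ⊆ insert f M.E := h1.trans (subset_insert _ _)
      have h3 : f ∈ insert f M.E := Or.inl rfl
      have h4 : e ∈ M.E := heE
      tauto
    have hMsub : M.closure I ⊆ M'.closure I := by
      intro y hy
      have hyf : y ≠ f := fun h => hf (h ▸ M.mem_ground_of_mem_closure hy)
      exact (hkey y hyf).mpr hy
    have hb' : M'.IsBasis I X := hI'.isBasis_of_subset_of_subset_closure hIb.subset
      (hIb.subset_closure.trans hMsub)
    rw [← hb'.closure_eq_closure, ← hIb.closure_eq_closure]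
    by_cases hxf : x = f
    · rw [hxf, hkeyf]
      have hnf : f ∉ M.closure I := fun h => hf (M.mem_ground_of_mem_closure h)
      tauto
    · rw [hkey x hxf]
      tauto
  -- monotonicity transfer
  have hmono : ∀ X ⊆ M.E, ∀ Y ⊆ M.E, M.closure X ⊆ M.closure Y →
      M'.closure X ⊆ M'.closure Y := by
    intro X hX Y hY h x hx
    rw [key X hX] at hx
    rw [key Y hY]
    rcases hx with hx | ⟨rfl, hx⟩
    · exact Or.inl (h hx)
    · exact Or.inr ⟨rfl, h hx⟩
  -- swapping `f` for `e` does not change the closure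
  have hswap : ∀ X ⊆ M'.E, f ∈ X → M'.closure X = M'.closure (insert e (X \ {f})) := by
    intro X hX hfX
    have hfi : M'.Indep {f} := by rw [hI]; simp [he, hef]
    have hei : M'.Indep {e} := (hIff {e} (by simp [Ne.symm hef])).mpr he
    have hecl : e ∈ M'.closure X := by
      refine M'.closure_subset_closure (singleton_subset_iff.mpr hfX) ?_
      rw [hfi.mem_closure_iff]
      left
      have : insert e {f} = ({e, f} : Set α) := rfl
      rw [this]
      exact hefdep
    have hfcl : f ∈ M'.closure (insert e (X \ {f})) := by
      refine M'.closure_subset_closure (singleton_subset_iff.mpr (Or.inl rfl)) ?_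
      rw [hei.mem_closure_iff]
      left
      have : insert f {e} = ({e, f} : Set α) := by
        ext x; simp [or_comm]
      rw [this]
      exact hefdep
    have h1 : M'.closure (insert e X) = M'.closure X :=
      Matroid.closure_insert_eq_of_mem_closure hecl
    have h2 : M'.closure (insert f (insert e (X \ {f}))) = M'.closure (insert e (X \ {f})) :=
      Matroid.closure_insert_eq_of_mem_closure hfcl
    have h3 : insert f (insert e (X \ {f})) = insert e X := by
      rw [insert_comm, insert_diff_singleton, insert_eq_of_mem hfX]
    rw [← h1, ← h3, h2]
  -- every `M'`-circuit maps to a suitable subset of `M.E`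
  have main : ∀ C', M'.IsCircuit' C' → ∃ S, S ⊆ M.E ∧ M'.closure C' = M'.closure S ∧
      (M.IsCircuit' S ∨ S = {e}) ∧ (f ∈ C' → e ∈ S) ∧ C' \ {f} ⊆ S := by
    intro C' hC'
    have hC'E : C' ⊆ M'.E := hC'.1.subset_ground
    by_cases hfC : f ∈ C'
    · -- `f ∈ C'`
      by_cases heC : e ∈ C'
      · -- then `C' = {e, f}`
        have hsub : ({e, f} : Set α) ⊆ C' := insert_subset heC (singleton_subset_iff.mpr hfC)
        have hCeq : C' = {e, f} := by
          by_contra hne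
          have hss : ({e, f} : Set α) ⊂ C' := hsub.ssubset_of_ne (fun h => hne h.symm)
          exact hefdep.not_indep (hC'.2 _ hss)
        refine ⟨{e}, singleton_subset_iff.mpr heE, ?_, Or.inr rfl, fun _ => rfl, ?_⟩
        · rw [hswap C' hC'E hfC, hCeq]
          congr 1
          ext x
          simp [hef]
        · rw [hCeq]
          intro x hx
          simp only [mem_diff, mem_insert_iff, mem_singleton_iff] at hx ⊢
          tauto
      · -- `f ∈ C'`, `e ∉ C'` : the swap is an `M`-circuit
        set S := insert e (C' \ {f}) with hS
        have hSE : S ⊆ M.E := by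
          refine insert_subset heE ?_
          intro x hx
          have := hC'E hx.1
          rw [hE] at this
          rcases this with h | h
          · exact absurd h hx.2
          · exact h
        refine ⟨S, hSE, hswap C' hC'E hfC, Or.inl ?_, fun _ => Or.inl rfl, ?_⟩
        · constructor
          · rw [Matroid.dep_iff, and_iff_left hSE]
            intro hind
            have : M'.Indep C' := by
              rw [hI]; exact Or.inr ⟨hfC, heC, hind⟩
            exact hC'.1.not_indep this
          · intro D hD
            by_cases heD : e ∈ D
            · -- use the swapped-back set
              have hfD : f ∉ D := fun h => hf (hSE (hD.subset h))
              set D' := insert f (D \ {e}) with hD'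
              -- show D' ⊂ C'
              have hD'sub : D' ⊆ C' := by
                refine insert_subset hfC ?_
                intro x hx
                have hxS : x ∈ S := hD.subset hx.1
                rcases hxS with h | h
                · exact absurd h hx.2
                · exact h.1
              obtain ⟨y, hyC, hyD⟩ := exists_of_ssubset hD
              have hye : y ≠ e := fun h => hyD (h ▸ heD)
              have hyCf : y ∈ C' \ {f} := by
                rcases hyC with h | h
                · exact absurd h hye
                · exact h
              have hD'ne : D' ≠ C' := by
                intro h
                have : y ∈ D' := h ▸ hyCf.1
                rcases this with h' | h'
                · exact hyCf.2 h'
                · exact hyD h'.1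
              have hD'ind : M'.Indep D' := hC'.2 D' (hD'sub.ssubset_of_ne hD'ne)
              rw [hI] at hD'ind
              rcases hD'ind with ⟨h1, _⟩ | ⟨_, _, h3⟩
              · exact absurd (Or.inl rfl) h1
              · have hfDe : f ∉ D \ {e} := fun h => hfD h.1
                rw [hD', insert_diff_self_of_notMem hfDe, insert_diff_singleton,
                  insert_eq_of_mem heD] at h3
                exact h3
            · -- D avoids e, so it sits inside C' \ {f}
              have hDsub : D ⊆ C' \ {f} := by
                intro x hx
                rcases hD.subset hx with h | h
                · exact absurd (h ▸ hx) heD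
                · exact h
              have hCfind : M'.Indep (C' \ {f}) :=
                hC'.2 _ (sdiff_singleton_ssubset.mpr hfC)
              rw [hIff _ (fun h => h.2 rfl)] at hCfind
              exact hCfind.subset hDsub
        · intro x hx
          exact Or.inr hx
    · -- `f ∉ C'` : `C'` is already an `M`-circuit
      have hCE : C' ⊆ M.E := by
        intro x hx
        rcases hE ▸ hC'E hx with h | h
        · exact absurd (h ▸ hx) hfC
        · exact h
      refine ⟨C', hCE, rfl, Or.inl ?_, fun h => absurd h hfC, fun x hx => hx.1⟩
      constructor
      · rw [Matroid.dep_iff, and_iff_left hCE]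
        intro hind
        exact hC'.1.not_indep ((hIff C' hfC).mpr hind)
      · intro D hD
        have hfD : f ∉ D := fun h => hfC (hD.subset h)
        exact (hIff D hfD).mp (hC'.2 D hD)
  -- main argument
  intro C₁' C₂' h₁ h₂ hne
  obtain ⟨S₁, hS₁E, hcl₁, hS₁, hfS₁, hsub₁⟩ := main C₁' h₁
  obtain ⟨S₂, hS₂E, hcl₂, hS₂, hfS₂, hsub₂⟩ := main C₂' h₂
  -- `S₁` and `S₂` intersect
  have hSne : (S₁ ∩ S₂).Nonempty := by
    obtain ⟨x, hx₁, hx₂⟩ := hne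
    by_cases hxf : x = f
    · exact ⟨e, hfS₁ (hxf ▸ hx₁), hfS₂ (hxf ▸ hx₂)⟩
    · exact ⟨x, hsub₁ ⟨hx₁, hxf⟩, hsub₂ ⟨hx₂, hxf⟩⟩
  -- comparability of `M`-closures of `S₁` and `S₂`
  have hcomp : M.closure S₁ ⊆ M.closure S₂ ∨ M.closure S₂ ⊆ M.closure S₁ := by
    rcases hS₁ with hS₁ | rfl
    · rcases hS₂ with hS₂ | rfl
      · exact hM S₁ S₂ hS₁ hS₂ hSne
      · obtain ⟨x, hx₁, hx₂⟩ := hSne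
        have : e ∈ S₁ := by rwa [mem_singleton_iff.mp hx₂] at hx₁
        exact Or.inr (M.closure_subset_closure (singleton_subset_iff.mpr this))
    · obtain ⟨x, hx₁, hx₂⟩ := hSne
      have : e ∈ S₂ := by rwa [mem_singleton_iff.mp hx₁] at hx₂
      exact Or.inl (M.closure_subset_closure (singleton_subset_iff.mpr this))
  rw [hcl₁, hcl₂]
  rcases hcomp with h | h
  · exact Or.inl (hmono S₁ hS₁E S₂ hS₂E h)
  · exact Or.inr (hmono S₂ hS₂E S₁ hS₁E h)
end
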